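/- arXiv:2412.17115 — 6 statements merged into one kernel-verified Lean document; each statement's English description precedes it below -/
import Mathlib

section
/- There is a universal constant C > 0 such that the following holds. Let G = Cay(Γ, S) be a connected Abelian Cayley graph on n = |Γ| vertices with generating multiset S of size d, and let λ_2 > 0 be the second-smallest eigenvalue of its normalized Laplacian L. Then for every real τ with λ_2 ≤ τ ≤ 3/2, the number mul_τ(G) of eigenvalues of L that are at most τ satisfies mul_τ(G) ≤ (C·τ/λ_2)^{20d}. -/
open Matrix

/-- Normalized adjacency matrix of the Abelian Cayley graph `Cay(Γ, S)`:
`A x y = (multiplicity of `y - x` in `S`) / |S|`. -/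
noncomputable def cayleyAdj {Γ : Type*} [AddCommGroup Γ] [Fintype Γ] [DecidableEq Γ]
    (S : Multiset Γ) : Matrix Γ Γ ℝ :=
  Matrix.of fun x y => (S.count (y - x) : ℝ) / (Multiset.card S : ℝ)

/-- Normalized Laplacian `L = I - A` of the Abelian Cayley graph `Cay(Γ, S)`. -/
noncomputable def cayleyLap {Γ : Type*} [AddCommGroup Γ] [Fintype Γ] [DecidableEq Γ]
    (S : Multiset Γ) : Matrix Γ Γ ℝ :=
  1 - cayleyAdj S

/-- Sorted (nondecreasing) list of eigenvalues of a matrix, with multiplicity,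
realized as the roots of its characteristic polynomial. -/
noncomputable def eigList {Γ : Type*} [Fintype Γ] [DecidableEq Γ] (M : Matrix Γ Γ ℝ) : List ℝ :=
  Multiset.sort M.charpoly.roots (· ≤ ·)

/-- The `i`-th smallest eigenvalue (0-indexed, with multiplicity); `eig M 1 = λ₂`. -/
noncomputable def eig {Γ : Type*} [Fintype Γ] [DecidableEq Γ] (M : Matrix Γ Γ ℝ) (i : ℕ) : ℝ :=
  (eigList M).getD i 0

/-- `mul_τ`: the number of eigenvalues (with multiplicity) that are at most `τ`. -/
noncomputable def mulBelow {Γ : Type*} [Fintype Γ] [DecidableEq Γ]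
    (M : Matrix Γ Γ ℝ) (τ : ℝ) : ℕ :=
  Multiset.card (M.charpoly.roots.filter (fun x => x ≤ τ))

open Polynomial

variable {Γ : Type} [AddCommGroup Γ] [Fintype Γ] [DecidableEq Γ]

noncomputable def lamS (S : Multiset Γ) (ψ : AddChar Γ ℂ) : ℝ :=
  1 - (S.map fun s => (ψ s).re).sum / (Multiset.card S : ℝ)

section lamfacts
set_option linter.unusedSectionVars false

lemma lam_nonneg (S : Multiset Γ) (ψ : AddChar Γ ℂ) : 0 ≤ lamS S ψ := by
  rw [lamS]
  by_cases hc : (Multiset.card S : ℝ) = 0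
  · rw [hc, div_zero]; norm_num
  · have hcpos : (0:ℝ) < (Multiset.card S : ℝ) :=
      lt_of_le_of_ne (Nat.cast_nonneg _) (Ne.symm hc)
    have hsum : (S.map fun s => (ψ s).re).sum ≤ (Multiset.card S : ℝ) := by
      have h := Multiset.sum_le_card_nsmul (S.map fun s => (ψ s).re) 1 ?_
      · rwa [Multiset.card_map, nsmul_eq_mul, mul_one] at h
      · intro x hx
        obtain ⟨s, _, rfl⟩ := Multiset.mem_map.1 hx
        calc (ψ s).re ≤ ‖ψ s‖ := Complex.re_le_norm _
          _ = 1 := AddChar.norm_apply ψ s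
    have : (S.map fun s => (ψ s).re).sum / (Multiset.card S : ℝ) ≤ 1 :=
      (div_le_one hcpos).2 hsum
    linarith

lemma lam_one (S : Multiset Γ) (hS : S ≠ 0) : lamS S (1 : AddChar Γ ℂ) = 0 := by
  have hc : (0:ℝ) < (Multiset.card S : ℝ) := by
    exact_mod_cast Multiset.card_pos.2 hS
  rw [lamS]
  have : (S.map fun s => ((1 : AddChar Γ ℂ) s).re).sum = (Multiset.card S : ℝ) := by
    have : (S.map fun s => ((1 : AddChar Γ ℂ) s).re) = S.map fun _ => (1:ℝ) := by
      apply Multiset.map_congr rfl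
      intro s _
      simp
    rw [this, Multiset.map_const', Multiset.sum_replicate, nsmul_eq_mul, mul_one]
  rw [this, div_self hc.ne']
  ring

end lamfacts
lemma multiset_sum_eq_sum_univ (S : Multiset Γ) (f : Γ → ℂ) :
    (S.map f).sum = ∑ w, (S.count w : ℂ) * f w := by
  rw [Finset.sum_multiset_map_count]
  rw [Finset.sum_subset (Finset.subset_univ S.toFinset)]
  · exact Finset.sum_congr rfl fun w _ => by rw [nsmul_eq_mul]
  · intro x _ hx
    simp [Multiset.count_eq_zero_of_notMem (fun h => hx (Multiset.mem_toFinset.2 h))]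

lemma map_neg_self (S : Multiset Γ) (hsym : ∀ x : Γ, S.count (-x) = S.count x) :
    S.map (fun s => -s) = S := by
  ext a
  have : Multiset.count (-(-a)) (S.map fun s => -s) = Multiset.count (-a) S :=
    Multiset.count_map_eq_count' _ _ (fun x y h => by simpa using h) _
  simpa [hsym a] using this

lemma sum_map_char_real (S : Multiset Γ) (hsym : ∀ x : Γ, S.count (-x) = S.count x)
    (ψ : AddChar Γ ℂ) :
    (S.map fun s => ψ s).sum = ((S.map fun s => (ψ s).re).sum : ℝ) := by
  have hconj : (starRingEnd ℂ) (S.map fun s => ψ s).sum = (S.map fun s => ψ s).sum := by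
    rw [map_multiset_sum, Multiset.map_map]
    conv_rhs => rw [← map_neg_self S hsym, Multiset.map_map]
    exact congrArg _ (Multiset.map_congr rfl fun s _ => (AddChar.map_neg_eq_conj ψ s).symm)
  have him : (S.map fun s => ψ s).sum.im = 0 := by
    have := congrArg Complex.im hconj
    simp only [Complex.conj_im] at this
    linarith
  have hre : (S.map fun s => ψ s).sum.re = (S.map fun s => (ψ s).re).sum := by
    have := map_multiset_sum Complex.reAddGroupHom (S.map fun s => ψ s)
    simpa [Multiset.map_map, Function.comp] using this
  apply Complex.ext <;> simp [him, hre]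

lemma charpoly_eq_of_mul_eq {m : Type*} [Fintype m] [DecidableEq m] (M N U : Matrix m m ℂ)
    (hU : det U ≠ 0) (h : M * U = U * N) : M.charpoly = N.charpoly := by
  have h2 : charmatrix M * U.map C = U.map C * charmatrix N := by
    have hm : (M * U).map (C : ℂ →+* ℂ[X]) = (U * N).map (C : ℂ →+* ℂ[X]) := by rw [h]
    have hmap : ∀ (A B : Matrix m m ℂ), (A * B).map (C : ℂ →+* ℂ[X]) = A.map C * B.map C :=
      fun A B => by
        ext i j; simp [Matrix.map_apply, Matrix.mul_apply, map_sum]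
    rw [hmap, hmap] at hm
    simp only [charmatrix, RingHom.mapMatrix_apply, sub_mul, mul_sub]
    rw [hm, (Matrix.scalar_commute (X : ℂ[X]) (fun r => Commute.all _ _) (U.map C)).eq]
  have hdet := congrArg det h2
  rw [det_mul, det_mul] at hdet
  have hCU : det (U.map (C : ℂ →+* ℂ[X])) ≠ 0 := by
    have : U.map (C : ℂ →+* ℂ[X]) = (C : ℂ →+* ℂ[X]).mapMatrix U := rfl
    rw [this, ← RingHom.map_det]
    simpa using hU
  rw [Matrix.charpoly, Matrix.charpoly]
  rw [mul_comm] at hdet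
  exact mul_left_cancel₀ hCU hdet

lemma charpoly_diagonal {m : Type*} [Fintype m] [DecidableEq m] (v : m → ℂ) :
    (diagonal v).charpoly = ∏ i, (X - C (v i)) := by
  rw [Matrix.charpoly]
  have : charmatrix (diagonal v) = diagonal (fun i => (X : ℂ[X]) - C (v i)) := by
    ext i j
    by_cases h : i = j <;> simp [h, charmatrix_apply, diagonal_apply_ne, diagonal]
  rw [this, det_diagonal]

theorem roots_cayleyLap (S : Multiset Γ) (hsym : ∀ x : Γ, S.count (-x) = S.count x) :
    (cayleyLap S).charpoly.roots = Multiset.map (lamS S) (Finset.univ (α := AddChar Γ ℂ)).val := by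
  classical
  obtain ⟨e⟩ : Nonempty (Γ ≃ AddChar Γ ℂ) := ⟨Fintype.equivOfCardEq AddChar.card_eq.symm⟩
  set U : Matrix Γ Γ ℂ := Matrix.of fun x y => (e y) x with hU
  have hA : (cayleyAdj S).map (algebraMap ℝ ℂ) * U
      = U * diagonal (fun y => (S.map fun s => (e y) s).sum / (Multiset.card S : ℂ)) := by
    ext x y
    rw [Matrix.mul_apply, Matrix.mul_diagonal]
    have hre : ∀ z, (cayleyAdj S).map (algebraMap ℝ ℂ) x z
        = (S.count (z - x) : ℂ) / (Multiset.card S : ℂ) := by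
      intro z
      simp [cayleyAdj, Matrix.map_apply, Complex.ofReal_div]
    have hsum : ∑ z, ((S.count (z - x) : ℂ) / (Multiset.card S : ℂ)) * (e y) z
        = ∑ w, ((S.count w : ℂ) / (Multiset.card S : ℂ)) * ((e y) x * (e y) w) := by
      refine (Fintype.sum_equiv (Equiv.addLeft x) _ _ fun w => ?_).symm
      simp [AddChar.map_add_eq_mul, add_sub_cancel_left, Equiv.coe_addLeft]
    simp only [hre, hU, Matrix.of_apply]
    rw [hsum]
    rw [multiset_sum_eq_sum_univ]
    rw [Finset.sum_div, Finset.mul_sum]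
    refine Finset.sum_congr rfl fun w _ => by ring
  have hdvec : ∀ y : Γ, 1 - (S.map fun s => (e y) s).sum / (Multiset.card S : ℂ)
      = ((lamS S (e y) : ℝ) : ℂ) := by
    intro y
    rw [sum_map_char_real S hsym]
    rw [lamS]
    push_cast
    ring
  have hL : (cayleyLap S).map (algebraMap ℝ ℂ) * U
      = U * diagonal (fun y => ((lamS S (e y) : ℝ) : ℂ)) := by
    have hlap : (cayleyLap S).map (algebraMap ℝ ℂ)
        = 1 - (cayleyAdj S).map (algebraMap ℝ ℂ) := by
      ext i j
      by_cases h : i = j <;>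
        simp [cayleyLap, Matrix.map_apply, Matrix.sub_apply, Matrix.one_apply, h]
    rw [hlap, sub_mul, one_mul, hA]
    have h1 : (1 : Matrix Γ Γ ℂ)
        - diagonal (fun y => (S.map fun s => (e y) s).sum / (Multiset.card S : ℂ))
        = diagonal (fun y => ((lamS S (e y) : ℝ) : ℂ)) := by
      rw [← Matrix.diagonal_one, Matrix.diagonal_sub]
      exact congrArg Matrix.diagonal (funext fun y => hdvec y)
    calc U - U * diagonal (fun y => (S.map fun s => (e y) s).sum / (Multiset.card S : ℂ))
        = U * 1 - U * diagonal (fun y => (S.map fun s => (e y) s).sum / (Multiset.card S : ℂ)) := by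
          rw [mul_one]
      _ = U * (1 - diagonal (fun y => (S.map fun s => (e y) s).sum / (Multiset.card S : ℂ))) := by
          rw [mul_sub]
      _ = _ := by rw [h1]
  have hdet : det U ≠ 0 := by
    have hUU : Uᴴ * U = (Fintype.card Γ : ℂ) • 1 := by
      ext y y'
      rw [Matrix.mul_apply]
      have : ∀ x, Uᴴ y x * U x y' = ((e y)⁻¹ * (e y')) x := by
        intro x
        simp only [Matrix.conjTranspose_apply, hU, Matrix.of_apply, AddChar.mul_apply,
          AddChar.inv_apply]
        rw [AddChar.map_neg_eq_conj]
        rfl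
      simp only [this]
      rw [AddChar.sum_eq_ite]
      have h01 : ((0 : AddChar Γ ℂ) = 1) := rfl
      by_cases h : y = y'
      · subst h
        simp [Matrix.smul_apply, Matrix.one_apply, h01]
      · have hne : (e y)⁻¹ * (e y') ≠ 0 := by
          intro hh
          rw [h01] at hh
          exact h (e.injective (eq_of_inv_mul_eq_one hh))
        simp [hne, Matrix.smul_apply, Matrix.one_apply, h]
    have hcard : ((Fintype.card Γ : ℂ)) ^ (Fintype.card Γ) ≠ 0 := by
      apply pow_ne_zero
      exact_mod_cast Fintype.card_ne_zero
    have := congrArg det hUU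
    rw [det_mul, Matrix.det_smul, det_one, mul_one] at this
    intro h0
    rw [h0, mul_zero] at this
    exact hcard this.symm
  have hcp : (cayleyLap S).charpoly = ∏ y : Γ, (X - C (lamS S (e y))) := by
    apply Polynomial.map_injective (algebraMap ℝ ℂ) (algebraMap ℝ ℂ).injective
    rw [← Matrix.charpoly_map]
    rw [charpoly_eq_of_mul_eq _ _ U hdet hL, _root_.charpoly_diagonal]
    rw [Polynomial.map_prod]
    refine Finset.prod_congr rfl fun y _ => ?_
    simp
  rw [hcp, Finset.prod_eq_multiset_prod]
  have hmm : (Multiset.map (fun y : Γ => X - C (lamS S (e y))) Finset.univ.val)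
      = Multiset.map (fun a => X - C a) (Multiset.map (fun y : Γ => lamS S (e y)) Finset.univ.val) := by
    rw [Multiset.map_map]
    rfl
  rw [hmm, roots_multiset_prod_X_sub_C]
  have h2 := congrArg Finset.val (Finset.map_univ_equiv e)
  rw [Finset.map_val] at h2
  calc Multiset.map (fun y : Γ => lamS S (e y)) Finset.univ.val
      = Multiset.map (lamS S) (Multiset.map (⇑e.toEmbedding) Finset.univ.val) := by
        rw [Multiset.map_map]
        rfl
    _ = _ := by rw [h2]
open MeasureTheory Metric
open scoped ENNReal

lemma card_le_of_separated {E : Type*} [NormedAddCommGroup E] [NormedSpace ℝ E]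
    [MeasurableSpace E] [BorelSpace E] [FiniteDimensional ℝ E] [Nontrivial E]
    (μ : Measure E) [μ.IsAddHaarMeasure]
    {ι : Type*} [DecidableEq ι] (T : Finset ι) (x : ι → E) (c : E) {r R : ℝ}
    (hr : 0 < r) (hR : 0 ≤ R)
    (hsep : ∀ i ∈ T, ∀ j ∈ T, i ≠ j → r ≤ dist (x i) (x j))
    (hball : ∀ i ∈ T, dist (x i) c ≤ R) :
    (T.card : ℝ) ≤ ((2 * R + r) / r) ^ (Module.finrank ℝ E) := by
  have hdisj : (T : Set ι).PairwiseDisjoint (fun i => ball (x i) (r / 2)) := by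
    intro i hi j hj hij
    exact ball_disjoint_ball (by linarith [hsep i hi j hj hij])
  have hsub : (⋃ i ∈ T, ball (x i) (r / 2)) ⊆ ball c (R + r / 2) := by
    intro y hy
    simp only [Set.mem_iUnion] at hy
    obtain ⟨i, hi, hyi⟩ := hy
    have h1 : dist y (x i) < r / 2 := mem_ball.1 hyi
    have h2 := hball i hi
    exact mem_ball.2 (lt_of_le_of_lt (dist_triangle y (x i) c) (by linarith))
  have hmeas : ∀ i ∈ T, MeasurableSet (ball (x i) (r / 2)) :=
    fun i _ => measurableSet_ball
  have hsum : ∑ i ∈ T, μ (ball (x i) (r / 2)) ≤ μ (ball c (R + r / 2)) := by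
    rw [← measure_biUnion_finset hdisj hmeas]
    exact measure_mono hsub
  have hball0 : ∀ i, μ (ball (x i) (r / 2)) = μ (ball (0 : E) (r / 2)) :=
    fun i => Measure.addHaar_ball_center μ (x i) _
  simp only [hball0, Finset.sum_const, nsmul_eq_mul] at hsum
  rw [Measure.addHaar_ball μ (0 : E) (by linarith : (0:ℝ) ≤ r / 2),
    Measure.addHaar_ball μ c (by linarith : (0:ℝ) ≤ R + r / 2)] at hsum
  have hv0 : 0 < μ (ball (0 : E) 1) := measure_ball_pos μ 0 one_pos
  have hvt : μ (ball (0 : E) 1) ≠ ⊤ := measure_ball_lt_top.ne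
  rw [← mul_assoc] at hsum
  have hsum2 : (T.card : ℝ≥0∞) * ENNReal.ofReal ((r / 2) ^ Module.finrank ℝ E)
      ≤ ENNReal.ofReal ((R + r / 2) ^ Module.finrank ℝ E) :=
    (ENNReal.mul_le_mul_iff_left hv0.ne' hvt).1 hsum
  have hreal : (T.card : ℝ) * (r / 2) ^ Module.finrank ℝ E ≤ (R + r / 2) ^ Module.finrank ℝ E := by
    have := hsum2
    rw [← ENNReal.ofReal_natCast, ← ENNReal.ofReal_mul (by positivity)] at this
    exact (ENNReal.ofReal_le_ofReal_iff (by positivity)).1 this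
  have hpos : (0:ℝ) < (r / 2) ^ Module.finrank ℝ E := by positivity
  have : (T.card : ℝ) ≤ (R + r / 2) ^ Module.finrank ℝ E / (r / 2) ^ Module.finrank ℝ E := by
    rw [le_div_iff₀ hpos]
    exact hreal
  calc (T.card : ℝ) ≤ (R + r / 2) ^ Module.finrank ℝ E / (r / 2) ^ Module.finrank ℝ E := this
    _ = ((R + r / 2) / (r / 2)) ^ Module.finrank ℝ E := (div_pow _ _ _).symm
    _ = ((2 * R + r) / r) ^ Module.finrank ℝ E := by
        congr 1
        field_simp

set_option linter.unusedSectionVars false in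
lemma lam_ge_eig₁ (S : Multiset Γ) (hS : S ≠ 0) (hsym : ∀ x : Γ, S.count (-x) = S.count x)
    (hpos : 0 < eig (cayleyLap S) 1) :
    ∀ χ : AddChar Γ ℂ, χ ≠ 1 → eig (cayleyLap S) 1 ≤ lamS S χ := by
  classical
  intro χ hχ
  by_contra hlt
  push_neg at hlt
  have hroots := roots_cayleyLap S hsym
  have hcoe : ((eigList (cayleyLap S) : List ℝ) : Multiset ℝ) = (cayleyLap S).charpoly.roots :=
    Multiset.sort_eq (cayleyLap S).charpoly.roots (· ≤ ·)
  have hsorted : (eigList (cayleyLap S)).Pairwise (· ≤ ·) := Multiset.pairwise_sort (cayleyLap S).charpoly.roots (· ≤ ·)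
  have hmem : ∀ a : ℝ, a ∈ eigList (cayleyLap S) ↔
      ∃ ψ : AddChar Γ ℂ, lamS S ψ = a := by
    intro a
    rw [← Multiset.mem_coe, hcoe, hroots, Multiset.mem_map]
    constructor
    · rintro ⟨ψ, _, h⟩; exact ⟨ψ, h⟩
    · rintro ⟨ψ, h⟩; exact ⟨ψ, Finset.mem_univ_val _, h⟩
  have hlen2 : 2 ≤ (eigList (cayleyLap S)).length := by
    by_contra hle
    push_neg at hle
    have : eig (cayleyLap S) 1 = 0 := List.getD_eq_default _ _ (by omega)
    rw [this] at hpos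
    exact lt_irrefl _ hpos
  obtain ⟨a, t0, h0⟩ : ∃ a t0, eigList (cayleyLap S) = a :: t0 := by
    cases h : eigList (cayleyLap S) with
    | nil => rw [h] at hlen2; simp at hlen2
    | cons a t => exact ⟨a, t, rfl⟩
  obtain ⟨b, t, h1⟩ : ∃ b t, t0 = b :: t := by
    cases h : t0 with
    | nil => rw [h0, h] at hlen2; simp at hlen2
    | cons b t => exact ⟨b, t, rfl⟩
  rw [h1] at h0
  have heig : eig (cayleyLap S) 1 = b := by
    rw [eig, h0]
    rfl
  rw [h0] at hsorted
  have hsort1 : ∀ v ∈ b :: t, a ≤ v := (List.pairwise_cons.1 hsorted).1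
  have hsort2 : ∀ v ∈ t, b ≤ v := (List.pairwise_cons.1 (List.pairwise_cons.1 hsorted).2).1
  have hnn : ∀ v ∈ eigList (cayleyLap S), (0:ℝ) ≤ v := by
    intro v hv
    obtain ⟨ψ, hψ⟩ := (hmem v).1 hv
    rw [← hψ]
    exact lam_nonneg S ψ
  have h0mem : (0:ℝ) ∈ eigList (cayleyLap S) := (hmem 0).2 ⟨1, lam_one S hS⟩
  have ha0 : a = 0 := by
    have hge : 0 ≤ a := hnn a (by rw [h0]; exact List.mem_cons_self)
    have hle : a ≤ 0 := by
      rw [h0] at h0mem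
      rcases List.mem_cons.1 h0mem with h | h
      · exact le_of_eq h.symm
      · exact hsort1 0 h
    exact le_antisymm hle hge
  have hvmem : lamS S χ ∈ eigList (cayleyLap S) := (hmem _).2 ⟨χ, rfl⟩
  rw [h0] at hvmem
  rcases List.mem_cons.1 hvmem with hv | hv
  · -- lamS S χ = a = 0 : two characters achieve 0
    have hlam0 : lamS S χ = 0 := hv.trans ha0
    have hcount : 2 ≤ Multiset.count (0:ℝ) ((cayleyLap S).charpoly.roots) := by
      rw [hroots, Multiset.count_map]
      have hpair : ({(1 : AddChar Γ ℂ), χ} : Finset (AddChar Γ ℂ))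
          ⊆ Finset.univ.filter (fun ψ => (0:ℝ) = lamS S ψ) := by
        intro ψ hψ
        rcases Finset.mem_insert.1 hψ with h | h
        · subst h
          exact Finset.mem_filter.2 ⟨Finset.mem_univ _, (lam_one S hS).symm⟩
        · rw [Finset.mem_singleton.1 h]
          exact Finset.mem_filter.2 ⟨Finset.mem_univ _, hlam0.symm⟩
      have hc2 : ({(1 : AddChar Γ ℂ), χ} : Finset (AddChar Γ ℂ)).card = 2 :=
        Finset.card_pair (fun h => hχ h.symm)
      calc 2 = ({(1 : AddChar Γ ℂ), χ} : Finset (AddChar Γ ℂ)).card := hc2.symm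
        _ ≤ (Finset.univ.filter (fun ψ => (0:ℝ) = lamS S ψ)).card :=
            Finset.card_le_card hpair
        _ = Multiset.card (Multiset.filter (fun ψ => (0:ℝ) = lamS S ψ) Finset.univ.val) := rfl
  
    have hcl : 2 ≤ (eigList (cayleyLap S)).count (0:ℝ) := by
      have := hcount
      rw [← hcoe, Multiset.coe_count] at this
      exact this
    rw [h0, ha0] at hcl
    have : (0:ℝ) ∈ b :: t := by
      have h3 : (b :: t).count (0:ℝ) ≥ 1 := by
        rw [List.count_cons_self] at hcl
        omega
      exact List.count_pos_iff.1 (by omega)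
    have hb0 : b ≤ 0 := by
      rcases List.mem_cons.1 this with h | h
      · exact le_of_eq h.symm
      · exact hsort2 0 h
    rw [heig] at hpos
    linarith
  · -- lamS S χ ∈ b :: t so b ≤ lamS S χ
    have hble : b ≤ lamS S χ := by
      rcases List.mem_cons.1 hv with h | h
      · exact le_of_eq h.symm
      · exact hsort2 _ h
    rw [heig] at hlt
    linarith


set_option maxHeartbeats 1000000 in
/-- There is a universal constant `C > 0` such that for every connected
Abelian Cayley graph `G = Cay(Γ, S)` with generating multiset `S` of size `d`
(symmetric: `x` and `-x` have the same multiplicity), with second-smallest normalized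
Laplacian eigenvalue `λ₂ > 0`, and every `τ` with `λ₂ ≤ τ ≤ 3/2`, one has
`mul_τ(G) ≤ (C·τ/λ₂)^(20 d)`. -/
theorem sparsestCut_eigenvalue_multiplicity_bound :
    ∃ C : ℝ, 0 < C ∧
      ∀ (Γ : Type) (_ : AddCommGroup Γ) (_ : Fintype Γ) (_ : DecidableEq Γ)
        (S : Multiset Γ),
        S ≠ 0 →
        (∀ x : Γ, S.count (-x) = S.count x) →
        0 < eig (cayleyLap S) 1 →
        ∀ τ : ℝ, eig (cayleyLap S) 1 ≤ τ → τ ≤ 3 / 2 →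
          (mulBelow (cayleyLap S) τ : ℝ)
            ≤ (C * τ / eig (cayleyLap S) 1) ^ (20 * Multiset.card S) := by

  classical
  refine ⟨9, by norm_num, ?_⟩
  intro Γ iG iF iD S hS hsym hpos τ hτl hτu
  set lm2 := eig (cayleyLap S) 1 with hlm2
  have hroots := roots_cayleyLap S hsym
  have hd0 : 0 < Multiset.card S := Multiset.card_pos.2 hS
  have hd : (0:ℝ) < (Multiset.card S : ℝ) := by exact_mod_cast hd0
  have hτpos : 0 < τ := lt_of_lt_of_le hpos hτl
  -- mulBelow as a count of characters
  set T : Finset (AddChar Γ ℂ) := Finset.univ.filter (fun ψ => lamS S ψ ≤ τ) with hT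
  have hmul : (mulBelow (cayleyLap S) τ : ℝ) = (T.card : ℝ) := by
    have : mulBelow (cayleyLap S) τ = T.card := by
      rw [mulBelow, hroots, Multiset.filter_map, Multiset.card_map]
      rfl
    rw [this]
  -- Euclidean embedding
  set lst : List Γ := S.toList with hlst
  have hlen : lst.length = Multiset.card S := Multiset.length_toList S
  have hlenpos : 0 < lst.length := by omega
  haveI : Nonempty (Fin lst.length × Fin 2) := ⟨(⟨0, hlenpos⟩, 0)⟩
  set Φ : AddChar Γ ℂ → EuclideanSpace ℝ (Fin lst.length × Fin 2) :=
    fun ψ => WithLp.toLp 2 (fun (p : Fin lst.length × Fin 2) => if p.2 = (0 : Fin 2) then (ψ (lst.get p.1)).re else (ψ (lst.get p.1)).im)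
    with hΦ
  have hnormsq : ∀ z : ℂ, ‖z‖^2 = z.re^2 + z.im^2 := fun z => by
    rw [Complex.sq_norm, Complex.normSq_apply]
    ring
  -- the key distance computation
  have key : ∀ ψ φ : AddChar Γ ℂ,
      dist (Φ ψ) (Φ φ) ^ 2 = 2 * (Multiset.card S : ℝ) * lamS S (ψ * φ⁻¹) := by
    intro ψ φ
    set χ := ψ * φ⁻¹ with hχ
    have hsq : dist (Φ ψ) (Φ φ)^2 = ∑ p : Fin lst.length × Fin 2, dist (Φ ψ p) (Φ φ p)^2 := by
      rw [EuclideanSpace.dist_eq, Real.sq_sqrt]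
      positivity
    rw [hsq, Fintype.sum_prod_type]
    have hterm : ∀ i : Fin lst.length,
        ∑ j : Fin 2, dist (Φ ψ (i, j)) (Φ φ (i, j))^2
          = 2 - 2 * (χ (lst.get i)).re := by
      intro i
      set s := lst.get i with hs
      have hχnorm : ‖χ s‖ = 1 := AddChar.norm_apply χ s
      have hφnorm : ‖φ s‖ = 1 := AddChar.norm_apply φ s
      have hφne : φ s ≠ 0 := by
        intro h
        rw [h, norm_zero] at hφnorm
        norm_num at hφnorm
      have hχs : χ s = ψ s * (φ s)⁻¹ := by
        rw [hχ, AddChar.mul_apply, AddChar.inv_apply']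
      have hfac : ψ s - φ s = φ s * (χ s - 1) := by
        rw [hχs]
        field_simp
      have hnorm1 : ‖ψ s - φ s‖^2 = ‖χ s - 1‖^2 := by
        rw [hfac, norm_mul, hφnorm, one_mul]
      have hlhs : ∑ j : Fin 2, dist (Φ ψ (i, j)) (Φ φ (i, j))^2
          = ((ψ s).re - (φ s).re)^2 + ((ψ s).im - (φ s).im)^2 := by
        rw [Fin.sum_univ_two]
        simp only [hΦ]
        norm_num [Real.dist_eq, sq_abs]
        rfl
      have hmid : ((ψ s).re - (φ s).re)^2 + ((ψ s).im - (φ s).im)^2 = ‖χ s - 1‖^2 := by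
        rw [← hnorm1, hnormsq]
        simp [Complex.sub_re, Complex.sub_im]
      have hrhs : ‖χ s - 1‖^2 = 2 - 2 * (χ s).re := by
        have h1 : (χ s).re^2 + (χ s).im^2 = 1 := by
          rw [← hnormsq, hχnorm]
          norm_num
        rw [hnormsq]
        simp only [Complex.sub_re, Complex.sub_im, Complex.one_re, Complex.one_im]
        nlinarith [h1]
      rw [hlhs, hmid, hrhs]
    rw [Finset.sum_congr rfl (fun i _ => hterm i)]
    have hresum : ∑ i : Fin lst.length, (χ (lst.get i)).re
        = (S.map fun s => (χ s).re).sum := by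
      have h1 : ∑ i : Fin lst.length, (χ (lst.get i)).re
          = (lst.map fun s => (χ s).re).sum := by
        rw [← Fin.sum_univ_fun_getElem lst (fun s => (χ s).re)]
        exact Finset.sum_congr rfl fun i _ => by rw [List.get_eq_getElem]
      rw [h1]
      have h2 : S.map (fun s => (χ s).re) = ((lst.map fun s => (χ s).re : List ℝ) : Multiset ℝ) := by
        rw [hlst, ← Multiset.map_coe, Multiset.coe_toList]
      rw [h2, Multiset.sum_coe]
    rw [Finset.sum_sub_distrib, Finset.sum_const, Finset.card_univ, Fintype.card_fin]
    rw [← Finset.mul_sum, hresum]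
    rw [lamS]
    rw [hlen]
    rw [nsmul_eq_mul]
    push_cast
    have hne : ((Multiset.card S : ℝ)) ≠ 0 := ne_of_gt hd
    field_simp
  -- packing
  set r : ℝ := Real.sqrt ((2 * (Multiset.card S : ℝ)) * lm2) with hr'
  set R : ℝ := Real.sqrt ((2 * (Multiset.card S : ℝ)) * τ) with hR'
  have hrpos : 0 < r := Real.sqrt_pos.2 (by positivity)
  have hRnn : 0 ≤ R := Real.sqrt_nonneg _
  have hsep : ∀ ψ ∈ T, ∀ φ ∈ T, ψ ≠ φ → r ≤ dist (Φ ψ) (Φ φ) := by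
    intro ψ _ φ _ hne
    have hχne : ψ * φ⁻¹ ≠ 1 := by
      intro h
      exact hne (by simpa using mul_inv_eq_one.1 h)
    have hlam := lam_ge_eig₁ S hS hsym hpos (ψ * φ⁻¹) hχne
    have hd2 : (2 * (Multiset.card S : ℝ)) * lm2 ≤ dist (Φ ψ) (Φ φ)^2 := by
      rw [key ψ φ]
      have : 2 * (Multiset.card S : ℝ) * lm2 ≤ 2 * (Multiset.card S : ℝ) * lamS S (ψ * φ⁻¹) := by
        apply mul_le_mul_of_nonneg_left hlam (by positivity)
      linarith [this]
    calc r ≤ Real.sqrt (dist (Φ ψ) (Φ φ)^2) := Real.sqrt_le_sqrt hd2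
      _ = dist (Φ ψ) (Φ φ) := Real.sqrt_sq dist_nonneg
  have hball : ∀ ψ ∈ T, dist (Φ ψ) (Φ 1) ≤ R := by
    intro ψ hψ
    have hψτ : lamS S ψ ≤ τ := (Finset.mem_filter.1 hψ).2
    have hd2 : dist (Φ ψ) (Φ 1)^2 ≤ (2 * (Multiset.card S : ℝ)) * τ := by
      rw [key ψ 1]
      have h1 : ψ * (1 : AddChar Γ ℂ)⁻¹ = ψ := by simp
      rw [h1]
      have := mul_le_mul_of_nonneg_left hψτ (show (0:ℝ) ≤ 2 * (Multiset.card S : ℝ) by positivity)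
      linarith [this]
    calc dist (Φ ψ) (Φ 1) = Real.sqrt (dist (Φ ψ) (Φ 1)^2) := (Real.sqrt_sq dist_nonneg).symm
      _ ≤ R := Real.sqrt_le_sqrt hd2
  have hpack := card_le_of_separated (volume : MeasureTheory.Measure
      (EuclideanSpace ℝ (Fin lst.length × Fin 2))) T Φ (Φ 1) hrpos hRnn hsep hball
  have hfr : Module.finrank ℝ (EuclideanSpace ℝ (Fin lst.length × Fin 2))
      = lst.length * 2 := by
    rw [finrank_euclideanSpace, Fintype.card_prod, Fintype.card_fin, Fintype.card_fin]
  rw [hfr] at hpack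
  -- number crunching
  have hq1 : 1 ≤ τ / lm2 := (one_le_div hpos).2 hτl
  have hqs : 1 ≤ Real.sqrt (τ / lm2) := by
    rw [show (1:ℝ) = Real.sqrt 1 by rw [Real.sqrt_one]]
    exact Real.sqrt_le_sqrt hq1
  have hRr : R / r = Real.sqrt (τ / lm2) := by
    rw [hr', hR', ← Real.sqrt_div (by positivity)]
    congr 1
    rw [mul_div_mul_left τ lm2 (by positivity : 2 * (Multiset.card S : ℝ) ≠ 0)]
  have hfrac : (2 * R + r) / r ≤ 3 * Real.sqrt (τ / lm2) := by
    have : (2 * R + r) / r = 2 * (R / r) + 1 := by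
      field_simp
    rw [this, hRr]
    linarith
  have h3 : ((2 * R + r) / r) ^ (lst.length * 2)
      ≤ (3 * Real.sqrt (τ / lm2)) ^ (lst.length * 2) := by
    apply pow_le_pow_left₀ (by positivity) hfrac
  have h4 : (3 * Real.sqrt (τ / lm2)) ^ (lst.length * 2) = (9 * (τ / lm2)) ^ lst.length := by
    rw [pow_mul']
    congr 1
    rw [mul_pow, Real.sq_sqrt (le_of_lt (div_pos hτpos hpos))]
    norm_num
  have h5 : (9 * (τ / lm2)) ^ lst.length ≤ (9 * (τ / lm2)) ^ (20 * Multiset.card S) := by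
    apply pow_le_pow_right₀ (by linarith)
    omega
  have hfinal : (9 * τ / lm2) = 9 * (τ / lm2) := by ring
  rw [hmul, hfinal]
  calc (T.card : ℝ) ≤ ((2 * R + r) / r) ^ (lst.length * 2) := hpack
    _ ≤ (3 * Real.sqrt (τ / lm2)) ^ (lst.length * 2) := h3
    _ = (9 * (τ / lm2)) ^ lst.length := h4
    _ ≤ (9 * (τ / lm2)) ^ (20 * Multiset.card S) := h5
end

section
/- Let d ≥ 1 and t ≥ 0 be integers, and let μ, c : {1, …, d} → ℕ satisfy Σ_{i=1}^d μ_i = Σ_{i=1}^d c_i = 2t and |μ_i − μ_j| ≤ 1 for all i, j. Then (2t)! · d^{2t} · Π_{i=1}^d (c_i + μ_i)! ≤ (2e)^d · (4t)! · Π_{i=1}^d c_i!. Equivalently, for the multinomial random variables C^{(2t)} and C^{(4t)} recording the counts of 2t (respectively 4t) i.i.d. uniform draws from {1,…,d}, Pr(C^{(2t)} = c) ≤ (2e)^d · Pr(C^{(4t)} = c + μ). -/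
open Real Finset Filter
open scoped Nat

namespace MDC

private lemma e_le_two_sqrt_pi : Real.exp 1 ≤ 2 * Real.sqrt π := by
  have h4 : (2:ℝ) * Real.sqrt π = Real.sqrt (4 * π) := by
    rw [show (4:ℝ) * π = 2^2 * π by ring, Real.sqrt_mul (by positivity),
      Real.sqrt_sq (by norm_num)]
  rw [h4, Real.le_sqrt (Real.exp_pos 1).le (by positivity)]
  have h : Real.exp 1 ^ 2 < 4 * π := by
    nlinarith [Real.exp_one_lt_d9, Real.pi_gt_three, Real.exp_pos 1]
  linarith

private lemma stirlingSeq_le_one (m : ℕ) :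
    Stirling.stirlingSeq (m + 1) ≤ Real.exp 1 / Real.sqrt 2 := by
  have h := Stirling.stirlingSeq'_antitone (Nat.zero_le m)
  simpa [Function.comp, Stirling.stirlingSeq_one] using h

private lemma sqrt_pi_le_stirlingSeq (m : ℕ) :
    Real.sqrt π ≤ Stirling.stirlingSeq (m + 1) := by
  have ht : Tendsto (Stirling.stirlingSeq ∘ Nat.succ) atTop (nhds (Real.sqrt π)) :=
    Stirling.tendsto_stirlingSeq_sqrt_pi.comp (Filter.tendsto_add_atTop_nat 1)
  exact Stirling.stirlingSeq'_antitone.le_of_tendsto ht m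

private lemma factorial_le_stirling (n : ℕ) (hn : 1 ≤ n) :
    (n ! : ℝ) ≤ Real.exp 1 / Real.sqrt 2 * (Real.sqrt (2 * n) * ((n : ℝ) / Real.exp 1) ^ n) := by
  obtain ⟨m, rfl⟩ : ∃ m, n = m + 1 := ⟨n - 1, by omega⟩
  have hD : (0:ℝ) < Real.sqrt (2 * (m+1 : ℕ)) * (((m+1 : ℕ) : ℝ) / Real.exp 1) ^ (m+1) := by
    have : (0:ℝ) < ((m+1 : ℕ) : ℝ) := by positivity
    positivity
  have h := stirlingSeq_le_one m
  rw [Stirling.stirlingSeq, div_le_iff₀ hD] at h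
  linarith [h]

private lemma factorial_ge_stirling (n : ℕ) (hn : 1 ≤ n) :
    Real.sqrt π * (Real.sqrt (2 * n) * ((n : ℝ) / Real.exp 1) ^ n) ≤ (n ! : ℝ) := by
  obtain ⟨m, rfl⟩ : ∃ m, n = m + 1 := ⟨n - 1, by omega⟩
  have hD : (0:ℝ) < Real.sqrt (2 * (m+1 : ℕ)) * (((m+1 : ℕ) : ℝ) / Real.exp 1) ^ (m+1) := by
    have : (0:ℝ) < ((m+1 : ℕ) : ℝ) := by positivity
    positivity
  have h := sqrt_pi_le_stirlingSeq m
  rw [Stirling.stirlingSeq, le_div_iff₀ hD] at h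
  linarith [h]

private lemma shift_up (m : ℕ) : ∀ k, (m + k + m)! * 2^(2*m) * m ! ≤ (2*m)! * 2^(m + k + m) * (m + k)!
  | 0 => by
      rw [show m + 0 + m = 2*m from by ring, Nat.add_zero]
  | (k+1) => by
      have ih := shift_up m k
      have h1 : (m + (k+1) + m)! = (m + k + m + 1) * (m + k + m)! := by
        rw [show m + (k+1) + m = (m + k + m) + 1 from by ring, Nat.factorial_succ]
      calc (m + (k+1) + m)! * 2^(2*m) * m !
          = (m + k + m + 1) * ((m + k + m)! * 2^(2*m) * m !) := by rw [h1]; ring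
        _ ≤ (m + k + m + 1) * ((2*m)! * 2^(m + k + m) * (m + k)!) :=
            Nat.mul_le_mul_left _ ih
        _ ≤ (2*(m + k + 1)) * ((2*m)! * 2^(m + k + m) * (m + k)!) :=
            Nat.mul_le_mul_right _ (by omega)
        _ = (2*m)! * 2^(m + (k+1) + m) * (m + k + 1)! := by
            rw [Nat.factorial_succ (m+k), show m + (k+1) + m = (m + k + m) + 1 from by ring,
              pow_succ]
            ring

private lemma shift_down (m : ℕ) : ∀ j, j ≤ m →
    ((m - j) + m)! * 2^(2*m) * m ! ≤ (2*m)! * 2^((m - j) + m) * (m - j)!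
  | 0, _ => by
      rw [show m - 0 + m = 2*m from by omega, Nat.sub_zero]
  | (j+1), hj => by
      have ih := shift_down m j (by omega)
      set cc := m - (j+1) with hcc
      have hc1 : m - j = cc + 1 := by omega
      rw [hc1] at ih
      have hfac : (cc + 1 + m)! = (cc + m + 1) * (cc + m)! := by
        rw [show cc + 1 + m = (cc + m) + 1 from by ring, Nat.factorial_succ]
      have hmul : (cc + m + 1) * ((cc + m)! * 2^(2*m) * m !)
          ≤ (cc + m + 1) * ((2*m)! * 2^(cc + m) * cc !) := by
        calc (cc + m + 1) * ((cc + m)! * 2^(2*m) * m !)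
            = (cc + 1 + m)! * 2^(2*m) * m ! := by rw [hfac]; ring
          _ ≤ (2*m)! * 2^(cc + 1 + m) * (cc + 1)! := ih
          _ = (2*(cc + 1)) * ((2*m)! * 2^(cc + m) * cc !) := by
              rw [Nat.factorial_succ cc, show cc + 1 + m = (cc + m) + 1 from by ring, pow_succ]
              ring
          _ ≤ (cc + m + 1) * ((2*m)! * 2^(cc + m) * cc !) :=
              Nat.mul_le_mul_right _ (by omega)
      exact Nat.le_of_mul_le_mul_left hmul (by omega)

private lemma shift_center (c m : ℕ) :
    (c + m)! * 2^(2*m) * m ! ≤ (2*m)! * 2^(c + m) * c ! := by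
  rcases le_total m c with h | h
  · have h2 := shift_up m (c - m)
    rw [show m + (c - m) = c from by omega] at h2
    exact h2
  · have h2 := shift_down m (m - c) (by omega)
    rw [show m - (m - c) = c from by omega] at h2
    exact h2

private lemma center_bound (m : ℕ) (hm : 1 ≤ m) :
    ((2*m)! : ℝ) ≤ 2 * 2^(2*m) * (m:ℝ)^m * Real.exp (-(m:ℝ)) * m ! := by
  have hE := Real.exp_pos 1
  have hm0 : (0:ℝ) < (m:ℝ) := by exact_mod_cast hm
  have h1 := factorial_le_stirling (2*m) (by omega)
  have h2 := factorial_ge_stirling m hm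
  have hexp : Real.exp (-(m:ℝ)) = (Real.exp 1 ^ m)⁻¹ := by
    rw [Real.exp_neg, ← Real.exp_nat_mul]
    norm_num
  have hc : ((2*m : ℕ):ℝ) = 2*(m:ℝ) := by push_cast; ring
  have key : Real.exp 1 / Real.sqrt 2 *
        (Real.sqrt (2 * (2*m : ℕ)) * (((2*m : ℕ):ℝ) / Real.exp 1) ^ (2*m))
      ≤ 2 * 2^(2*m) * (m:ℝ)^m * Real.exp (-(m:ℝ)) *
        (Real.sqrt π * (Real.sqrt (2 * m) * ((m:ℝ) / Real.exp 1) ^ m)) := by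
    have hs2 : (0:ℝ) < Real.sqrt 2 := by positivity
    calc Real.exp 1 / Real.sqrt 2 *
          (Real.sqrt (2 * (2*m : ℕ)) * (((2*m : ℕ):ℝ) / Real.exp 1) ^ (2*m))
        = (Real.exp 1 * Real.sqrt (2 * (m:ℝ))) * ((2*(m:ℝ)) / Real.exp 1) ^ (2*m) := by
          rw [hc, show (2:ℝ) * (2*(m:ℝ)) = 2 * (2*(m:ℝ)) from rfl,
            Real.sqrt_mul (by norm_num : (0:ℝ) ≤ 2) (2*(m:ℝ))]
          field_simp
      _ ≤ ((2 * Real.sqrt π) * Real.sqrt (2 * (m:ℝ))) * ((2*(m:ℝ)) / Real.exp 1) ^ (2*m) := by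
          apply mul_le_mul_of_nonneg_right _ (by positivity)
          apply mul_le_mul_of_nonneg_right e_le_two_sqrt_pi (Real.sqrt_nonneg _)
      _ = 2 * 2^(2*m) * (m:ℝ)^m * Real.exp (-(m:ℝ)) *
          (Real.sqrt π * (Real.sqrt (2 * m) * ((m:ℝ) / Real.exp 1) ^ m)) := by
          rw [hexp]
          rw [show 2*m = m + m from by ring]
          rw [pow_add, pow_add, div_pow, div_pow, mul_pow]
          field_simp
  calc ((2*m)! : ℝ) ≤ _ := h1
    _ ≤ _ := key
    _ ≤ 2 * 2^(2*m) * (m:ℝ)^m * Real.exp (-(m:ℝ)) * (m ! : ℝ) := by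
        apply mul_le_mul_of_nonneg_left h2 (by positivity)

private lemma core (c m : ℕ) (hm : 1 ≤ m) :
    ((c+m)! : ℝ) ≤ 2 * 2^(c+m) * (m:ℝ)^m * Real.exp (-(m:ℝ)) * c ! := by
  have hsc : ((c+m)! : ℝ) * 2^(2*m) * m ! ≤ ((2*m)! : ℝ) * 2^(c+m) * c ! := by
    exact_mod_cast shift_center c m
  have hcb := center_bound m hm
  have hX : (0:ℝ) < 2^(2*m) * (m ! : ℝ) := by positivity
  have h3 : ((c+m)! : ℝ) * (2^(2*m) * (m ! : ℝ))
      ≤ (2 * 2^(c+m) * (m:ℝ)^m * Real.exp (-(m:ℝ)) * c !) * (2^(2*m) * (m ! : ℝ)) := by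
    calc ((c+m)! : ℝ) * (2^(2*m) * (m ! : ℝ)) = ((c+m)! : ℝ) * 2^(2*m) * m ! := by ring
      _ ≤ ((2*m)! : ℝ) * 2^(c+m) * c ! := hsc
      _ ≤ (2 * 2^(2*m) * (m:ℝ)^m * Real.exp (-(m:ℝ)) * m !) * 2^(c+m) * c ! := by
          apply mul_le_mul_of_nonneg_right
          apply mul_le_mul_of_nonneg_right hcb (by positivity)
          positivity
      _ = (2 * 2^(c+m) * (m:ℝ)^m * Real.exp (-(m:ℝ)) * c !) * (2^(2*m) * (m ! : ℝ)) := by ring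
  exact le_of_mul_le_mul_right h3 hX

private lemma lam_bound {lam : ℝ} {m : ℕ} (hm : 1 ≤ m) (h1 : 1 ≤ lam)
    (hhi : lam ≤ (m:ℝ) + 1) (hlo : (m:ℝ) - 1 ≤ lam) :
    (m:ℝ)^m * Real.exp (-(m:ℝ)) ≤ Real.exp 1 * (lam^m * Real.exp (-lam)) := by
  have hm0 : (0:ℝ) < (m:ℝ) := by exact_mod_cast hm
  rcases le_or_gt lam m with hc | hc
  · rcases Nat.lt_or_ge m 2 with hm2 | hm2
    · -- m = 1, so lam = 1
      have hmeq : m = 1 := by omega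
      subst hmeq
      have hl1 : lam = 1 := le_antisymm (by exact_mod_cast hc) h1
      subst hl1
      simp only [Nat.cast_one, pow_one, one_pow]
      nlinarith [Real.exp_pos (-(1:ℝ)), Real.one_le_exp (by norm_num : (0:ℝ) ≤ 1)]
    · -- m ≥ 2
      have hmge2 : (2:ℝ) ≤ (m:ℝ) := by exact_mod_cast hm2
      have hm1p : (0:ℝ) < (m:ℝ) - 1 := by linarith
      set x : ℝ := lam - ((m:ℝ) - 1) with hx
      have hx0 : 0 ≤ x := by simp only [hx]; linarith
      have hx1 : x ≤ 1 := by simp only [hx]; linarith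
      have h3 : (0:ℝ) < 1 - x/(m:ℝ) := by
        have : x/(m:ℝ) < 1 := by rw [div_lt_one hm0]; linarith
        linarith
      -- exp(x/m) ≤ 1 + x/(m-1)
      have hstep : Real.exp (x/(m:ℝ)) ≤ 1 + x/((m:ℝ)-1) := by
        have h2 : 1 - x/(m:ℝ) ≤ Real.exp (-(x/(m:ℝ))) := by
          have := Real.add_one_le_exp (-(x/(m:ℝ))); linarith
        have h5 : (1 - x/(m:ℝ)) * Real.exp (x/(m:ℝ)) ≤ 1 := by
          have h6 := mul_le_mul_of_nonneg_right h2 (Real.exp_pos (x/(m:ℝ))).le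
          rwa [← Real.exp_add, neg_add_cancel, Real.exp_zero] at h6
        have h7 : Real.exp (x/(m:ℝ)) ≤ (1 - x/(m:ℝ))⁻¹ := by
          rw [inv_eq_one_div, le_div_iff₀ h3]
          linarith [h5]
        refine h7.trans ?_
        rw [inv_eq_one_div, div_le_iff₀ h3]
        have expand : (1 + x/((m:ℝ)-1)) * (1 - x/(m:ℝ))
            = 1 + x*(1-x)/(((m:ℝ)-1)*(m:ℝ)) := by field_simp; ring
        rw [expand]
        have : 0 ≤ x*(1-x)/(((m:ℝ)-1)*(m:ℝ)) := by
          apply div_nonneg (by nlinarith) (by positivity)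
        linarith
      -- exp x ≤ (lam/(m-1))^m
      have hexpx : Real.exp x ≤ (lam/((m:ℝ)-1))^m := by
        have he : Real.exp x = Real.exp (x/(m:ℝ)) ^ m := by
          rw [← Real.exp_nat_mul]
          congr 1
          field_simp
        rw [he]
        have hb : 1 + x/((m:ℝ)-1) = lam/((m:ℝ)-1) := by
          field_simp [hx]
          rw [hx]; ring
        rw [← hb]
        exact pow_le_pow_left₀ (Real.exp_pos _).le hstep m
      have hlam_ge : ((m:ℝ)-1)^m * Real.exp x ≤ lam^m := by
        have h8 := mul_le_mul_of_nonneg_left hexpx (pow_nonneg hm1p.le m)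
        rw [div_pow] at h8
        rwa [mul_div_cancel₀ _ (by positivity : ((m:ℝ)-1)^m ≠ 0)] at h8
      -- m^m ≤ e^2 (m-1)^m
      have hE2 : (m:ℝ)^m ≤ Real.exp 2 * ((m:ℝ)-1)^m := by
        have h9 : (m:ℝ)/((m:ℝ)-1) ≤ Real.exp (1/((m:ℝ)-1)) := by
          have h10 := Real.add_one_le_exp (1/((m:ℝ)-1))
          have h11 : (m:ℝ)/((m:ℝ)-1) = 1/((m:ℝ)-1) + 1 := by field_simp; ring
          linarith
        have h12 : ((m:ℝ)/((m:ℝ)-1))^m ≤ Real.exp (1/((m:ℝ)-1)) ^ m :=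
          pow_le_pow_left₀ (by positivity) h9 m
        have h13 : Real.exp (1/((m:ℝ)-1)) ^ m = Real.exp ((m:ℝ)/((m:ℝ)-1)) := by
          rw [← Real.exp_nat_mul]
          congr 1
          field_simp
        have h14 : Real.exp ((m:ℝ)/((m:ℝ)-1)) ≤ Real.exp 2 := by
          rw [Real.exp_le_exp, div_le_iff₀ hm1p]
          linarith
        have h15 : (m:ℝ)^m = ((m:ℝ)/((m:ℝ)-1))^m * ((m:ℝ)-1)^m := by
          rw [div_pow, div_mul_cancel₀]
          positivity
        have h16 : ((m:ℝ)/((m:ℝ)-1))^m ≤ Real.exp 2 := by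
          rw [← h13] at h14
          exact h12.trans h14
        rw [h15]
        exact mul_le_mul_of_nonneg_right h16 (by positivity)
      -- combine
      have hid : Real.exp 2 * Real.exp (-(m:ℝ)) = Real.exp 1 * Real.exp x * Real.exp (-lam) := by
        rw [← Real.exp_add, ← Real.exp_add, ← Real.exp_add]
        congr 1
        rw [hx]; ring
      have step1 : (m:ℝ)^m * Real.exp (-(m:ℝ)) ≤ Real.exp 2 * ((m:ℝ)-1)^m * Real.exp (-(m:ℝ)) :=
        mul_le_mul_of_nonneg_right hE2 (Real.exp_pos _).le
      have step2 : Real.exp 2 * ((m:ℝ)-1)^m * Real.exp (-(m:ℝ))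
          = Real.exp 1 * (((m:ℝ)-1)^m * Real.exp x) * Real.exp (-lam) := by
        calc Real.exp 2 * ((m:ℝ)-1)^m * Real.exp (-(m:ℝ))
            = ((m:ℝ)-1)^m * (Real.exp 2 * Real.exp (-(m:ℝ))) := by ring
          _ = ((m:ℝ)-1)^m * (Real.exp 1 * Real.exp x * Real.exp (-lam)) := by rw [hid]
          _ = Real.exp 1 * (((m:ℝ)-1)^m * Real.exp x) * Real.exp (-lam) := by ring
      have step3 : Real.exp 1 * (((m:ℝ)-1)^m * Real.exp x) * Real.exp (-lam)
          ≤ Real.exp 1 * lam^m * Real.exp (-lam) := by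
        apply mul_le_mul_of_nonneg_right _ (Real.exp_pos _).le
        exact mul_le_mul_of_nonneg_left hlam_ge (Real.exp_pos _).le
      calc (m:ℝ)^m * Real.exp (-(m:ℝ))
          ≤ Real.exp 2 * ((m:ℝ)-1)^m * Real.exp (-(m:ℝ)) := step1
        _ = Real.exp 1 * (((m:ℝ)-1)^m * Real.exp x) * Real.exp (-lam) := step2
        _ ≤ Real.exp 1 * lam^m * Real.exp (-lam) := step3
        _ = Real.exp 1 * (lam^m * Real.exp (-lam)) := by ring
  · -- lam > m
    have h1m : (m:ℝ)^m ≤ lam^m := pow_le_pow_left₀ hm0.le hc.le m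
    have h2m : Real.exp (-((m:ℝ)+1)) ≤ Real.exp (-lam) := by
      rw [Real.exp_le_exp]; linarith
    have hid : (m:ℝ)^m * Real.exp (-(m:ℝ)) = Real.exp 1 * ((m:ℝ)^m * Real.exp (-((m:ℝ)+1))) := by
      rw [show Real.exp 1 * ((m:ℝ)^m * Real.exp (-((m:ℝ)+1)))
          = (m:ℝ)^m * (Real.exp 1 * Real.exp (-((m:ℝ)+1))) from by ring, ← Real.exp_add]
      ring_nf
    rw [hid]
    apply mul_le_mul_of_nonneg_left _ (Real.exp_pos 1).le
    calc (m:ℝ)^m * Real.exp (-((m:ℝ)+1)) ≤ lam^m * Real.exp (-((m:ℝ)+1)) := by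
          apply mul_le_mul_of_nonneg_right h1m (Real.exp_pos _).le
      _ ≤ lam^m * Real.exp (-lam) := by
          apply mul_le_mul_of_nonneg_left h2m (by positivity)

private lemma pc (c m : ℕ) (lam : ℝ) (hm : 1 ≤ m) (h1 : 1 ≤ lam)
    (hhi : lam ≤ (m:ℝ) + 1) (hlo : (m:ℝ) - 1 ≤ lam) :
    ((c + m)! : ℝ) ≤ (2 * Real.exp 1 * Real.exp (-lam)) * (2^(c+m) * lam^m * (c ! : ℝ)) := by
  have h0 := core c m hm
  have h2 := lam_bound hm h1 hhi hlo
  calc ((c + m)! : ℝ) ≤ 2 * 2^(c+m) * (m:ℝ)^m * Real.exp (-(m:ℝ)) * c ! := h0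
    _ = (2 * 2^(c+m) * (c ! : ℝ)) * ((m:ℝ)^m * Real.exp (-(m:ℝ))) := by ring
    _ ≤ (2 * 2^(c+m) * (c ! : ℝ)) * (Real.exp 1 * (lam^m * Real.exp (-lam))) := by
        apply mul_le_mul_of_nonneg_left h2 (by positivity)
    _ = (2 * Real.exp 1 * Real.exp (-lam)) * (2^(c+m) * lam^m * (c ! : ℝ)) := by ring

private lemma glb (t : ℕ) (ht : 1 ≤ t) :
    ((2*t)! : ℝ) * (2*(t:ℝ))^(2*t) * 2^(4*t) * Real.exp (-(2*(t:ℝ))) ≤ ((4*t)! : ℝ) := by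
  have hE := Real.exp_pos 1
  have ht0 : (0:ℝ) < (t:ℝ) := by exact_mod_cast ht
  have h1 := factorial_le_stirling (2*t) (by omega)
  have h2 := factorial_ge_stirling (4*t) (by omega)
  have hc2 : ((2*t : ℕ):ℝ) = 2*(t:ℝ) := by push_cast; ring
  have hc4 : ((4*t : ℕ):ℝ) = 4*(t:ℝ) := by push_cast; ring
  rw [hc2] at h1
  rw [hc4] at h2
  have hs1 : Real.sqrt (2*(2*(t:ℝ))) = Real.sqrt 2 * Real.sqrt (2*(t:ℝ)) :=
    Real.sqrt_mul (by norm_num) _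
  have hs2 : Real.sqrt (2*(4*(t:ℝ))) = 2 * Real.sqrt (2*(t:ℝ)) := by
    rw [show (2:ℝ)*(4*(t:ℝ)) = 2^2*(2*(t:ℝ)) from by ring,
      Real.sqrt_mul (by positivity), Real.sqrt_sq (by norm_num)]
  rw [hs1] at h1
  rw [hs2] at h2
  have hexp : Real.exp (-(2*(t:ℝ))) = (Real.exp 1 ^ (2*t))⁻¹ := by
    rw [Real.exp_neg, ← Real.exp_nat_mul]
    norm_num
  have hsq2 : Real.sqrt 2 ≠ 0 := by positivity
  have hpows : ((2*(t:ℝ))/Real.exp 1)^(2*t) * ((2*(t:ℝ))^(2*t) * 2^(4*t) * Real.exp (-(2*(t:ℝ))))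
      = ((4*(t:ℝ))/Real.exp 1)^(4*t) := by
    rw [hexp, show 4*t = 2*t + 2*t from by ring, pow_add, pow_add, div_pow, div_pow,
      show (4:ℝ)*(t:ℝ) = 2*(2*(t:ℝ)) from by ring, mul_pow]
    field_simp
    simp only [mul_pow]
    ring_nf
    rw [show (4:ℝ) = 2^2 by norm_num, ← pow_mul]
    ring
  have final : ((2*t)! : ℝ) * (2*(t:ℝ))^(2*t) * 2^(4*t) * Real.exp (-(2*(t:ℝ)))
      ≤ (Real.exp 1 * Real.sqrt (2*(t:ℝ))) * ((4*(t:ℝ))/Real.exp 1)^(4*t) := by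
    calc ((2*t)! : ℝ) * (2*(t:ℝ))^(2*t) * 2^(4*t) * Real.exp (-(2*(t:ℝ)))
        = ((2*t)! : ℝ) * ((2*(t:ℝ))^(2*t) * 2^(4*t) * Real.exp (-(2*(t:ℝ)))) := by ring
      _ ≤ (Real.exp 1 / Real.sqrt 2 * (Real.sqrt 2 * Real.sqrt (2*(t:ℝ)) *
            ((2*(t:ℝ))/Real.exp 1)^(2*t))) * ((2*(t:ℝ))^(2*t) * 2^(4*t) * Real.exp (-(2*(t:ℝ)))) := by
          apply mul_le_mul_of_nonneg_right _ (by positivity)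
          calc ((2*t)! : ℝ) ≤ _ := h1
            _ = Real.exp 1 / Real.sqrt 2 * (Real.sqrt 2 * Real.sqrt (2*(t:ℝ)) *
                ((2*(t:ℝ))/Real.exp 1)^(2*t)) := by ring
      _ = (Real.exp 1 * Real.sqrt (2*(t:ℝ))) * (((2*(t:ℝ))/Real.exp 1)^(2*t) *
            ((2*(t:ℝ))^(2*t) * 2^(4*t) * Real.exp (-(2*(t:ℝ))))) := by
          field_simp
      _ = (Real.exp 1 * Real.sqrt (2*(t:ℝ))) * ((4*(t:ℝ))/Real.exp 1)^(4*t) := by rw [hpows]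
  calc ((2*t)! : ℝ) * (2*(t:ℝ))^(2*t) * 2^(4*t) * Real.exp (-(2*(t:ℝ)))
      ≤ (Real.exp 1 * Real.sqrt (2*(t:ℝ))) * ((4*(t:ℝ))/Real.exp 1)^(4*t) := final
    _ ≤ (2 * Real.sqrt π * Real.sqrt (2*(t:ℝ))) * ((4*(t:ℝ))/Real.exp 1)^(4*t) := by
        apply mul_le_mul_of_nonneg_right _ (by positivity)
        apply mul_le_mul_of_nonneg_right e_le_two_sqrt_pi (Real.sqrt_nonneg _)
    _ = Real.sqrt π * (2 * Real.sqrt (2*(t:ℝ)) * ((4*(t:ℝ))/Real.exp 1)^(4*t)) := by ring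
    _ ≤ ((4*t)! : ℝ) := h2

private lemma caseA_key (d t : ℕ) (hd : 1 ≤ d) (ht : 1 ≤ t) (hdt : 2*t ≤ d) :
    ((2*t)! : ℝ) * (d:ℝ)^(2*t) * 2^(2*t) ≤ (2*Real.exp 1)^d * ((4*t)! : ℝ) := by
  have ht0 : (0:ℝ) < (t:ℝ) := by exact_mod_cast ht
  have hnat : ((2*t)! : ℕ) * (2*t+1)^(2*t) ≤ (4*t)! := by
    have h := Nat.factorial_mul_pow_le_factorial (m := 2*t) (n := 2*t)
    rwa [show 2*t + 2*t = 4*t from by ring] at h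
  have hreal : ((2*t)! : ℝ) * (2*(t:ℝ)+1)^(2*t) ≤ ((4*t)! : ℝ) := by exact_mod_cast hnat
  have hkey : (d:ℝ) ≤ 2*(t:ℝ) * Real.exp ((d:ℝ)/(2*(t:ℝ)) - 1) := by
    have h := Real.add_one_le_exp ((d:ℝ)/(2*(t:ℝ)) - 1)
    have h2 : (d:ℝ)/(2*(t:ℝ)) ≤ Real.exp ((d:ℝ)/(2*(t:ℝ)) - 1) := by linarith
    calc (d:ℝ) = 2*(t:ℝ) * ((d:ℝ)/(2*(t:ℝ))) := by field_simp
      _ ≤ 2*(t:ℝ) * Real.exp ((d:ℝ)/(2*(t:ℝ)) - 1) :=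
          mul_le_mul_of_nonneg_left h2 (by positivity)
  have hpow : (d:ℝ)^(2*t) ≤ (2*(t:ℝ))^(2*t) * Real.exp ((d:ℝ) - 2*(t:ℝ)) := by
    calc (d:ℝ)^(2*t) ≤ (2*(t:ℝ) * Real.exp ((d:ℝ)/(2*(t:ℝ)) - 1))^(2*t) :=
          pow_le_pow_left₀ (Nat.cast_nonneg d) hkey _
      _ = (2*(t:ℝ))^(2*t) * Real.exp ((d:ℝ)/(2*(t:ℝ)) - 1)^(2*t) := mul_pow _ _ _
      _ = (2*(t:ℝ))^(2*t) * Real.exp ((d:ℝ) - 2*(t:ℝ)) := by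
          rw [← Real.exp_nat_mul]
          congr 1
          push_cast
          field_simp
  have hexp2 : Real.exp ((d:ℝ) - 2*(t:ℝ)) ≤ Real.exp (d:ℝ) := by
    rw [Real.exp_le_exp]; linarith
  have h2pow : (2:ℝ)^(2*t) ≤ 2^d := pow_le_pow_right₀ (by norm_num) hdt
  have hbase : (2*(t:ℝ))^(2*t) ≤ (2*(t:ℝ)+1)^(2*t) := pow_le_pow_left₀ (by positivity) (by linarith) _
  have h2e : (2*Real.exp 1)^d = 2^d * Real.exp (d:ℝ) := by
    rw [mul_pow]
    congr 1
    rw [← Real.exp_nat_mul]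
    norm_num
  calc ((2*t)! : ℝ) * (d:ℝ)^(2*t) * 2^(2*t)
      ≤ ((2*t)! : ℝ) * ((2*(t:ℝ))^(2*t) * Real.exp ((d:ℝ) - 2*(t:ℝ))) * 2^(2*t) := by
        apply mul_le_mul_of_nonneg_right _ (by positivity)
        exact mul_le_mul_of_nonneg_left hpow (by positivity)
    _ = ((2*t)! : ℝ) * (2*(t:ℝ))^(2*t) * Real.exp ((d:ℝ) - 2*(t:ℝ)) * 2^(2*t) := by ring
    _ ≤ ((2*t)! : ℝ) * (2*(t:ℝ)+1)^(2*t) * Real.exp (d:ℝ) * 2^d := by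
        gcongr
    _ ≤ ((4*t)! : ℝ) * Real.exp (d:ℝ) * 2^d := by
        apply mul_le_mul_of_nonneg_right _ (by positivity)
        exact mul_le_mul_of_nonneg_right hreal (Real.exp_pos _).le
    _ = (2*Real.exp 1)^d * ((4*t)! : ℝ) := by rw [h2e]; ring

end MDC

open MDC in
/-- Let `d ≥ 1` and `t ≥ 0` be integers, and let `μ, c : {1,…,d} → ℕ`
with `∑ μᵢ = ∑ cᵢ = 2t` and `|μᵢ − μⱼ| ≤ 1` for all `i, j`. Then
`(2t)! · d^(2t) · ∏ (cᵢ + μᵢ)! ≤ (2e)^d · (4t)! · ∏ cᵢ!`; equivalently, for multinomial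
counts, `Pr(C^(2t) = c) ≤ (2e)^d · Pr(C^(4t) = c + μ)`. -/
theorem multinomial_density_comparison (d t : ℕ) (hd : 1 ≤ d)
    (μ c : Fin d → ℕ)
    (hμsum : ∑ i, μ i = 2 * t) (hcsum : ∑ i, c i = 2 * t)
    (hbal : ∀ i j, μ i ≤ μ j + 1) :
    ((2 * t).factorial : ℝ) * (d : ℝ) ^ (2 * t) * ∏ i, ((c i + μ i).factorial : ℝ)
      ≤ (2 * Real.exp 1) ^ d * ((4 * t).factorial : ℝ) * ∏ i, ((c i).factorial : ℝ) := by
  classical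
  have hEpos := Real.exp_pos 1
  rcases Nat.eq_zero_or_pos t with ht0 | ht0
  · -- t = 0
    subst ht0
    have hc0 : ∀ i, c i = 0 := by simpa using hcsum
    have hμ0 : ∀ i, μ i = 0 := by simpa using hμsum
    simp only [hc0, hμ0, Nat.mul_zero, Nat.factorial_zero, Nat.add_zero, Nat.cast_one,
      pow_zero, mul_one, one_mul, Finset.prod_const_one]
    calc (1:ℝ) = 1^d := (one_pow d).symm
      _ ≤ (2*Real.exp 1)^d := by
          apply pow_le_pow_left₀ (by norm_num)
          nlinarith [Real.one_le_exp (le_refl (0:ℝ) |>.trans (by norm_num : (0:ℝ) ≤ 1))]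
  · by_cases hA : ∀ i, μ i ≤ 1
    · -- Case A : all μ i ≤ 1
      have h2td : 2*t ≤ d := by
        calc 2*t = ∑ i, μ i := hμsum.symm
          _ ≤ ∑ _i : Fin d, 1 := Finset.sum_le_sum (fun i _ => hA i)
          _ = d := by simp
      have hnatA : (∏ i, (c i + μ i)!) ≤ 2^(2*t) * ∏ i, (c i)! := by
        calc ∏ i, (c i + μ i)! ≤ ∏ i, (2^(c i) * (c i)!) := by
              apply Finset.prod_le_prod'
              intro i _
              rcases Nat.le_one_iff_eq_zero_or_eq_one.mp (hA i) with h | h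
              · rw [h, Nat.add_zero]
                exact Nat.le_mul_of_pos_left _ (by positivity)
              · rw [h, Nat.factorial_succ]
                exact Nat.mul_le_mul_right _ (Nat.lt_two_pow_self)
          _ = (∏ i, 2^(c i)) * ∏ i, (c i)! := Finset.prod_mul_distrib
          _ = 2^(2*t) * ∏ i, (c i)! := by rw [Finset.prod_pow_eq_pow_sum, hcsum]
      have hrealA : ∏ i, ((c i + μ i)! : ℝ) ≤ 2^(2*t) * ∏ i, ((c i)! : ℝ) := by
        exact_mod_cast hnatA
      have hkeyA := caseA_key d t hd ht0 h2td
      calc ((2*t)! : ℝ) * (d:ℝ)^(2*t) * ∏ i, ((c i + μ i)! : ℝ)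
          ≤ ((2*t)! : ℝ) * (d:ℝ)^(2*t) * (2^(2*t) * ∏ i, ((c i)! : ℝ)) := by
            apply mul_le_mul_of_nonneg_left hrealA (by positivity)
        _ = (((2*t)! : ℝ) * (d:ℝ)^(2*t) * 2^(2*t)) * ∏ i, ((c i)! : ℝ) := by ring
        _ ≤ ((2*Real.exp 1)^d * ((4*t)! : ℝ)) * ∏ i, ((c i)! : ℝ) := by
            apply mul_le_mul_of_nonneg_right hkeyA
            exact Finset.prod_nonneg fun i _ => by positivity
        _ = (2*Real.exp 1)^d * ((4*t)! : ℝ) * ∏ i, ((c i)! : ℝ) := by ring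
    · -- Case B : all μ i ≥ 1
      push_neg at hA
      obtain ⟨i₀, hi₀⟩ := hA
      have hall : ∀ j, 1 ≤ μ j := by
        intro j
        have := hbal i₀ j
        omega
      have hd2t : d ≤ 2*t := by
        calc d = ∑ _i : Fin d, 1 := by simp
          _ ≤ ∑ i, μ i := Finset.sum_le_sum (fun i _ => hall i)
          _ = 2*t := hμsum
      have hd0 : (0:ℝ) < (d:ℝ) := by exact_mod_cast hd
      set lam : ℝ := (2*(t:ℝ))/(d:ℝ) with hlam
      have hlamd : lam * (d:ℝ) = 2*(t:ℝ) := by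
        rw [hlam]; field_simp
      have hlam1 : 1 ≤ lam := by
        rw [hlam, le_div_iff₀ hd0]
        have : (d:ℝ) ≤ 2*(t:ℝ) := by exact_mod_cast hd2t
        linarith
      have hlo : ∀ i, (μ i : ℝ) - 1 ≤ lam := by
        intro i
        have h1 : ∑ _j : Fin d, μ i ≤ ∑ j, (μ j + 1) := Finset.sum_le_sum fun j _ => hbal i j
        have h2 : ∑ _j : Fin d, μ i = d * μ i := by
          rw [Finset.sum_const, Finset.card_univ, Fintype.card_fin, smul_eq_mul]
        have h3 : ∑ j, (μ j + 1) = 2*t + d := by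
          rw [Finset.sum_add_distrib, hμsum]
          simp
        have hn : d * μ i ≤ 2*t + d := by omega
        rw [hlam, le_div_iff₀ hd0]
        have hr : (d:ℝ) * (μ i:ℝ) ≤ 2*(t:ℝ) + d := by exact_mod_cast hn
        nlinarith
      have hhi : ∀ i, lam ≤ (μ i : ℝ) + 1 := by
        intro i
        have h1 : ∑ j, μ j ≤ ∑ _j : Fin d, (μ i + 1) := Finset.sum_le_sum fun j _ => hbal j i
        have h2 : ∑ _j : Fin d, (μ i + 1) = d * (μ i + 1) := by
          rw [Finset.sum_const, Finset.card_univ, Fintype.card_fin, smul_eq_mul]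
        have hn : 2*t ≤ d * (μ i + 1) := by omega
        rw [hlam, div_le_iff₀ hd0]
        have hr : 2*(t:ℝ) ≤ (d:ℝ) * ((μ i:ℝ) + 1) := by exact_mod_cast hn
        nlinarith
      have hPC : ∀ i, ((c i + μ i)! : ℝ)
          ≤ (2*Real.exp 1*Real.exp (-lam)) * (2^(c i + μ i) * lam^(μ i) * ((c i)! : ℝ)) :=
        fun i => pc (c i) (μ i) lam (hall i) hlam1 (hhi i) (hlo i)
      have hsum4 : ∑ i, (c i + μ i) = 4*t := by
        rw [Finset.sum_add_distrib, hcsum, hμsum]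
        omega
      have hprod : ∏ i, ((c i + μ i)! : ℝ)
          ≤ (2*Real.exp 1*Real.exp (-lam))^d * (2^(4*t) * lam^(2*t) * ∏ i, ((c i)! : ℝ)) := by
        calc ∏ i, ((c i + μ i)! : ℝ)
            ≤ ∏ i, ((2*Real.exp 1*Real.exp (-lam)) * (2^(c i + μ i) * lam^(μ i) * ((c i)! : ℝ))) :=
              Finset.prod_le_prod (fun i _ => by positivity) (fun i _ => hPC i)
          _ = (∏ _i : Fin d, (2*Real.exp 1*Real.exp (-lam))) *
              ((∏ i, (2:ℝ)^(c i + μ i)) * (∏ i, lam^(μ i)) * ∏ i, ((c i)! : ℝ)) := by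
              rw [Finset.prod_mul_distrib, Finset.prod_mul_distrib, Finset.prod_mul_distrib,
                Finset.prod_mul_distrib, Finset.prod_mul_distrib]
          _ = (2*Real.exp 1*Real.exp (-lam))^d * (2^(4*t) * lam^(2*t) * ∏ i, ((c i)! : ℝ)) := by
              rw [Finset.prod_const, Finset.card_univ, Fintype.card_fin,
                Finset.prod_pow_eq_pow_sum, Finset.prod_pow_eq_pow_sum, hsum4, hμsum]
      have hexp_d : (Real.exp (-lam))^d = Real.exp (-(2*(t:ℝ))) := by
        rw [← Real.exp_nat_mul]
        congr 1
        have : (d:ℝ) * -lam = -(lam * (d:ℝ)) := by ring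
        rw [this, hlamd]
      have hdl : (d:ℝ)^(2*t) * lam^(2*t) = (2*(t:ℝ))^(2*t) := by
        rw [← mul_pow, mul_comm, hlamd]
      have hGL := glb t ht0
      calc ((2*t)! : ℝ) * (d:ℝ)^(2*t) * ∏ i, ((c i + μ i)! : ℝ)
          ≤ ((2*t)! : ℝ) * (d:ℝ)^(2*t) *
              ((2*Real.exp 1*Real.exp (-lam))^d * (2^(4*t) * lam^(2*t) * ∏ i, ((c i)! : ℝ))) := by
            apply mul_le_mul_of_nonneg_left hprod (by positivity)
        _ = (2*Real.exp 1)^d *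
              (((2*t)! : ℝ) * ((d:ℝ)^(2*t) * lam^(2*t)) * 2^(4*t) * (Real.exp (-lam))^d) *
              ∏ i, ((c i)! : ℝ) := by
            rw [mul_pow]
            ring
        _ = (2*Real.exp 1)^d *
              (((2*t)! : ℝ) * (2*(t:ℝ))^(2*t) * 2^(4*t) * Real.exp (-(2*(t:ℝ)))) *
              ∏ i, ((c i)! : ℝ) := by
            rw [hdl, hexp_d]
        _ ≤ (2*Real.exp 1)^d * ((4*t)! : ℝ) * ∏ i, ((c i)! : ℝ) := by
            apply mul_le_mul_of_nonneg_right _ (Finset.prod_nonneg fun i _ => by positivity)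
            exact mul_le_mul_of_nonneg_left hGL (by positivity)
end

section
/- Let Γ be an abelian group (written additively), let d be a positive even integer, let s : {1, …, d} → Γ, and let σ be a fixed-point-free involution of {1, …, d} with s(σ(i)) = −s(i) for all i. Then for every t ∈ ℕ there exists μ : {1, …, d} → ℕ such that Σ_{i=1}^d μ_i = 2t, Σ_{i=1}^d μ_i · s(i) = 0 in Γ, and |μ_i − μ_j| ≤ 1 for all i, j. -/
lemma sum_zero_of_invariant {Γ : Type*} [AddCommGroup Γ] {d : ℕ}
    (s : Fin d → Γ) (σ : Equiv.Perm (Fin d))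
    (hinv : ∀ i, σ (σ i) = i) (hfree : ∀ i, σ i ≠ i)
    (hneg : ∀ i, s (σ i) = -s i)
    (S : Finset (Fin d)) (hS : ∀ i ∈ S, σ i ∈ S) :
    ∑ i ∈ S, s i = 0 := by
  refine Finset.sum_involution (fun a _ => σ a) (fun a ha => by rw [hneg]; abel)
    (fun a ha _ => hfree a) (fun a ha => hS a ha) (fun a ha => hinv a)

/-- Let `Γ` be an abelian group, `d` a positive even integer,
`s : {1,…,d} → Γ`, and `σ` a fixed-point-free involution of `{1,…,d}` with
`s(σ(i)) = −s(i)`. Then for every `t ∈ ℕ` there is a balanced `μ : {1,…,d} → ℕ`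
with `∑ μᵢ = 2t`, `∑ μᵢ·s(i) = 0`, and `|μᵢ − μⱼ| ≤ 1` for all `i, j`. -/
theorem exists_balanced_returning_count {Γ : Type*} [AddCommGroup Γ]
    (d : ℕ) (hd : 0 < d) (hdeven : Even d)
    (s : Fin d → Γ) (σ : Equiv.Perm (Fin d))
    (hinv : ∀ i, σ (σ i) = i) (hfree : ∀ i, σ i ≠ i)
    (hneg : ∀ i, s (σ i) = -s i) (t : ℕ) :
    ∃ μ : Fin d → ℕ,
      (∑ i, μ i = 2 * t) ∧ (∑ i, μ i • s i = 0) ∧ (∀ i j, μ i ≤ μ j + 1) := by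
  set q := 2 * t / d with hq
  set r := 2 * t % d with hr
  have hrd : r < d := Nat.mod_lt _ hd
  have hqr : d * q + r = 2 * t := Nat.div_add_mod (2 * t) d
  -- r is even
  have hre : Even r := by
    rcases hdeven with ⟨m, hm⟩
    have : Even (d * q) := ⟨m * q, by rw [hm]; ring⟩
    rcases this with ⟨u, hu⟩
    refine ⟨t - u, ?_⟩
    omega
  obtain ⟨k, hk⟩ := hre
  -- the set of representatives
  set A : Finset (Fin d) := Finset.univ.filter (fun i => i < σ i) with hA
  have hmemA : ∀ i, i ∈ A ↔ i < σ i := by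
    intro i; simp [hA]
  have hcompl : ∀ i, i ∉ A ↔ σ i < i := by
    intro i
    rw [hmemA]
    rcases lt_trichotomy i (σ i) with h | h | h
    · constructor
      · intro h'; exact absurd h h'
      · intro h'; omega
    · exact absurd h.symm (hfree i)
    · constructor
      · intro _; exact h
      · intro _; omega
  have hσA : ∀ i ∈ A, σ i ∉ A := by
    intro i hi
    rw [hmemA] at hi
    rw [hcompl, hinv]
    exact hi
  -- card A = d / 2
  have hAcard : 2 * A.card = d := by
    have hbij : A.card = Aᶜ.card := by
      apply Finset.card_bij (fun i _ => σ i)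
      · intro a ha; simpa using hσA a ha
      · intro a ha b hb hab
        have := congrArg σ hab
        rwa [hinv, hinv] at this
      · intro b hb
        refine ⟨σ b, ?_, hinv b⟩
        rw [hmemA, hinv]
        rw [Finset.mem_compl, hcompl] at hb
        exact hb
    have := Finset.card_compl A (α := Fin d)
    simp only [Fintype.card_fin] at this
    omega
  have hkA : k ≤ A.card := by omega
  obtain ⟨B, hBA, hBcard⟩ := Finset.exists_subset_card_eq hkA
  set S : Finset (Fin d) := B ∪ B.image σ with hS
  have hinj : Function.Injective σ := σ.injective
  have hdisj : Disjoint B (B.image σ) := by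
    rw [Finset.disjoint_left]
    intro a haB haI
    rw [Finset.mem_image] at haI
    obtain ⟨b, hbB, hba⟩ := haI
    have : σ b ∉ A := hσA b (hBA hbB)
    rw [hba] at this
    exact this (hBA haB)
  have hScard : S.card = r := by
    rw [hS, Finset.card_union_of_disjoint hdisj, Finset.card_image_of_injective _ hinj,
      hBcard]
    omega
  have hSmem : ∀ i, i ∈ S ↔ (i ∈ B ∨ σ i ∈ B) := by
    intro i
    rw [hS, Finset.mem_union, Finset.mem_image]
    constructor
    · rintro (h | ⟨b, hb, rfl⟩)
      · exact Or.inl h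
      · right; rwa [hinv]
    · rintro (h | h)
      · exact Or.inl h
      · exact Or.inr ⟨σ i, h, hinv i⟩
  have hSinv : ∀ i ∈ S, σ i ∈ S := by
    intro i hi
    rw [hSmem] at hi ⊢
    rcases hi with h | h
    · right; rwa [hinv]
    · exact Or.inl h
  refine ⟨fun i => q + (if i ∈ S then 1 else 0), ?_, ?_, ?_⟩
  · rw [Finset.sum_add_distrib, Finset.sum_const, Finset.sum_ite_mem,
      Finset.univ_inter, Finset.sum_const]
    simp only [Finset.card_univ, Fintype.card_fin, smul_eq_mul, mul_one, hScard]
    omega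
  · have h1 : ∑ i, (q + (if i ∈ S then 1 else 0)) • s i
        = ∑ i, q • s i + ∑ i, (if i ∈ S then 1 else 0) • s i := by
      rw [← Finset.sum_add_distrib]
      congr 1; ext i; rw [add_smul]
    rw [h1]
    have h2 : ∑ i, q • s i = q • ∑ i, s i := (Finset.smul_sum).symm
    have h3 : ∑ i, s i = 0 := by
      apply sum_zero_of_invariant s σ hinv hfree hneg
      intro i _; exact Finset.mem_univ _
    have h4 : ∑ i, (if i ∈ S then 1 else 0) • s i = ∑ i ∈ S, s i := by
      simp only [ite_smul, one_smul, zero_smul, Finset.sum_ite_mem, Finset.univ_inter]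
    rw [h2, h3, smul_zero, zero_add, h4,
      sum_zero_of_invariant s σ hinv hfree hneg S hSinv]
  · intro i j
    dsimp only
    split_ifs <;> omega
end

section
/- Let G = Cay(Γ, S) be an Abelian Cayley graph with |Γ| = n and |S| = d, with normalized adjacency matrix A. For every nonempty Q ⊆ Γ and every integer t ≥ 0, the conductance of Q in the 2t-th power graph satisfies φ_{G^{2t}}(Q) = (1_Q^T (I − A^{2t}) 1_Q)/|Q| ≤ 2·√(t·d)·φ_G(Q). -/
open Matrix Finset

set_option linter.unusedSectionVars false
set_option maxHeartbeats 1000000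

/-- `|∂Q|`: number of boundary edges of `Q` in `Cay(Γ, S)`, counted with multiplicity. -/
def cutEdges {Γ : Type*} [AddCommGroup Γ] [Fintype Γ] [DecidableEq Γ]
    (S : Multiset Γ) (Q : Finset Γ) : ℕ :=
  ∑ x ∈ Q, Multiset.card (S.filter (fun s => x + s ∉ Q))

/-- Conductance `φ_G(Q) = |∂Q| / (d·|Q|)` of a set `Q` in `Cay(Γ, S)`. -/
noncomputable def condSet {Γ : Type*} [AddCommGroup Γ] [Fintype Γ] [DecidableEq Γ]
    (S : Multiset Γ) (Q : Finset Γ) : ℝ :=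
  (cutEdges S Q : ℝ) / ((Multiset.card S : ℝ) * (Q.card : ℝ))

/-- 0/1 indicator vector of `Q`. -/
def indVec {Γ : Type*} [DecidableEq Γ] (Q : Finset Γ) : Γ → ℝ :=
  fun x => if x ∈ Q then 1 else 0

section helpers
variable {Γ : Type*} [AddCommGroup Γ] [Fintype Γ] [DecidableEq Γ]

lemma list_sum_map_get {M : Type*} [AddCommMonoid M] (l : List Γ) (f : Γ → M) :
    ∑ i : Fin l.length, f (l.get i) = (l.map f).sum := by
  induction l with
  | nil => simp
  | cons a l ih =>
    rw [List.map_cons, List.sum_cons, ← ih]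
    exact Fin.sum_univ_succ _

lemma list_sum_ite_count (l : List Γ) (g : Γ) :
    ∑ i : Fin l.length, (if l.get i = g then (1:ℝ) else 0) = (l.count g : ℝ) := by
  rw [list_sum_map_get l (fun x => if x = g then (1:ℝ) else 0)]
  induction l with
  | nil => simp
  | cons a l ih =>
    rw [List.map_cons, List.sum_cons, ih, List.count_cons]
    push_cast
    by_cases h : a = g <;> simp [h, add_comm]

/-- boundary count in direction `g` -/
def bnd (Q : Finset Γ) (g : Γ) : ℕ := (Q.filter (fun x => x + g ∉ Q)).card

lemma bnd_zero (Q : Finset Γ) : bnd Q 0 = 0 := by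
  simp only [bnd, add_zero, Finset.card_eq_zero]
  ext x; simp

lemma bnd_add_le (Q : Finset Γ) (g h : Γ) : bnd Q (g + h) ≤ bnd Q g + bnd Q h := by
  classical
  unfold bnd
  have hsplit : Q.filter (fun x => x + (g + h) ∉ Q) ⊆
      (Q.filter (fun x => x + g ∉ Q)) ∪ ((Q.filter (fun x => x + h ∉ Q)).image (fun y => y - g)) := by
    intro x hx
    simp only [Finset.mem_filter, Finset.mem_union, Finset.mem_image] at *
    by_cases hg : x + g ∈ Q
    · right
      refine ⟨x + g, ⟨hg, ?_⟩, by abel⟩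
      rw [← add_assoc] at hx
      exact hx.2
    · left; exact ⟨hx.1, hg⟩
  calc (Q.filter (fun x => x + (g + h) ∉ Q)).card
      ≤ _ := Finset.card_le_card hsplit
    _ ≤ (Q.filter (fun x => x + g ∉ Q)).card + ((Q.filter (fun x => x + h ∉ Q)).image (fun y => y - g)).card :=
        Finset.card_union_le _ _
    _ ≤ _ := Nat.add_le_add_left Finset.card_image_le _

lemma bnd_sum_le {ι : Type*} (Q : Finset Γ) (s : Finset ι) (g : ι → Γ) :
    (bnd Q (∑ i ∈ s, g i) : ℝ) ≤ ∑ i ∈ s, (bnd Q (g i) : ℝ) := by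
  refine Finset.le_sum_of_subadditive (fun x => (bnd Q x : ℝ)) (by simp [bnd_zero]) ?_ s g
  intro x y
  show ((bnd Q (x + y) : ℕ) : ℝ) ≤ ((bnd Q x : ℕ) : ℝ) + ((bnd Q y : ℕ) : ℝ)
  exact_mod_cast bnd_add_le Q x y

lemma bnd_nsmul_le (Q : Finset Γ) (n : ℕ) (g : Γ) : bnd Q (n • g) ≤ n * bnd Q g := by
  induction n with
  | zero => simp [bnd_zero]
  | succ n ih =>
    rw [succ_nsmul]
    calc bnd Q (n • g + g) ≤ bnd Q (n • g) + bnd Q g := bnd_add_le _ _ _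
      _ ≤ n * bnd Q g + bnd Q g := by omega
      _ = (n+1) * bnd Q g := by ring

lemma bnd_zsmul_le (Q : Finset Γ) (z : ℤ) (g : Γ) :
    (bnd Q (z • g) : ℝ) ≤ |(z:ℝ)| * ((bnd Q g : ℝ) + (bnd Q (-g) : ℝ)) := by
  have hnn : ∀ (n : ℕ) (h : Γ), (bnd Q ((n:ℤ) • h) : ℝ) ≤ (n : ℝ) * (bnd Q h : ℝ) := by
    intro n h
    rw [natCast_zsmul]
    calc ((bnd Q (n • h)):ℝ) ≤ ((n * bnd Q h : ℕ) : ℝ) := by exact_mod_cast bnd_nsmul_le Q n h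
      _ = (n:ℝ) * bnd Q h := by push_cast; ring
  obtain ⟨n, rfl | rfl⟩ := z.eq_nat_or_neg
  · have h2 : |((n:ℤ):ℝ)| = (n:ℝ) := by simp
    rw [h2]
    have := hnn n g
    nlinarith [Nat.cast_nonneg' (α := ℝ) (bnd Q (-g)), Nat.cast_nonneg' (α := ℝ) n]
  · rw [neg_zsmul, ← zsmul_neg]
    have := hnn n (-g)
    have h2 : |(((-(n:ℤ)) : ℤ) : ℝ)| = (n:ℝ) := by push_cast; simp
    rw [h2]
    nlinarith [Nat.cast_nonneg' (α := ℝ) (bnd Q g), Nat.cast_nonneg' (α := ℝ) n]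

lemma bnd_parity_le (Q : Finset Γ) (n : ℕ) (u : Γ) (hu : u + u = 0) :
    (bnd Q (n • u) : ℝ) ≤ ((n % 2 : ℕ) : ℝ) * (bnd Q u : ℝ) := by
  have key : n • u = (n % 2) • u := by
    conv_lhs => rw [← Nat.div_add_mod n 2]
    rw [add_smul, mul_comm, mul_smul]
    simp [two_smul, hu]
  rw [key]
  rcases Nat.mod_two_eq_zero_or_one n with h | h <;> simp [h, bnd_zero]

lemma exists_decomp (S : Multiset Γ) (hsym : ∀ x : Γ, S.count (-x) = S.count x) :
    ∃ T U : Multiset Γ, S = T + T.map (fun x => -x) + U ∧ ∀ u ∈ U, u + u = 0 := by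
  classical
  let e := Fintype.equivFin Γ
  let p : Γ → Prop := fun x => e x < e (-x)
  have hp : DecidablePred p := fun x => inferInstanceAs (Decidable (_ < _))
  refine ⟨S.filter p, S.filter (fun x => x + x = 0), ?_, ?_⟩
  · ext g
    rw [Multiset.count_add, Multiset.count_add, Multiset.count_filter, Multiset.count_filter]
    have hmap : Multiset.count g (Multiset.map (fun x => -x) (S.filter p)) =
        Multiset.count (-g) (S.filter p) := by
      have h := Multiset.count_map_eq_count' (fun x : Γ => -x) (S.filter p) neg_injective (-g)
      simpa using h
    rw [hmap, Multiset.count_filter, hsym]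
    have hinv : g + g = 0 ↔ g = -g := by
      constructor
      · intro h; exact eq_neg_of_add_eq_zero_left h
      · intro h; nth_rewrite 1 [h]; simp
    by_cases h0 : g + g = 0
    · have hg : g = -g := hinv.mp h0
      have h1 : ¬ p g := by simp only [p, ← hg, lt_irrefl, not_false_iff]
      have h2 : ¬ p (-g) := by rw [← hg]; exact h1
      simp [h0, h1, h2]
    · have hne : g ≠ -g := fun h => h0 (hinv.mpr h)
      have hene : e g ≠ e (-g) := fun h => hne (e.injective h)
      rcases lt_or_gt_of_ne hene with h | h
      · have hpg : p g := h
        have hpng : ¬ p (-g) := by simp only [p, neg_neg, not_lt]; exact le_of_lt h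
        simp [h0, hpg, hpng]
      · have hpg : ¬ p g := by simp only [p, not_lt]; exact le_of_lt h
        have hpng : p (-g) := by simp only [p, neg_neg]; exact h
        simp [h0, hpg, hpng]
  · intro u hu
    exact (Multiset.mem_filter.mp hu).2

lemma cut_as_map (S : Multiset Γ) (Q : Finset Γ) :
    cutEdges S Q = (S.map (fun s => bnd Q s)).sum := by
  induction S using Multiset.induction_on with
  | empty => simp [cutEdges]
  | cons a s ih =>
    rw [Multiset.map_cons, Multiset.sum_cons, ← ih]
    unfold cutEdges
    have hterm : ∀ x : Γ, Multiset.card ((a ::ₘ s).filter (fun y => x + y ∉ Q))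
        = (if x + a ∉ Q then 1 else 0) + Multiset.card (s.filter (fun y => x + y ∉ Q)) := by
      intro x
      rw [Multiset.filter_cons, Multiset.card_add]
      congr 1
      split <;> simp
    simp only [hterm]
    rw [Finset.sum_add_distrib]
    congr 1
    unfold bnd
    rw [Finset.card_filter]

end helpers

section walks
variable {V : Type*} [Fintype V] [DecidableEq V]

local notation "dd" => (Fintype.card V : ℝ)

lemma sum_pi_cons {M : Type*} [AddCommMonoid M] (m : ℕ) (F : (Fin (m+1) → V) → M) :
    ∑ f : Fin (m+1) → V, F f = ∑ s : V, ∑ f : Fin m → V, F (Fin.cons s f) := by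
  rw [← (Fin.consEquiv (fun _ : Fin (m+1) => V)).sum_comp F, Fintype.sum_prod_type]
  rfl

lemma card_fun_fin (m : ℕ) : Fintype.card (Fin m → V) = Fintype.card V ^ m := by
  rw [Fintype.card_fun, Fintype.card_fin]

lemma cons_split {M : Type*} [AddCommMonoid M] (ε : V → M) (m : ℕ) (s : V) (f : Fin m → V) :
    (∑ i : Fin (m+1), ε ((Fin.cons s f : Fin (m+1) → V) i)) = ε s + ∑ i, ε (f i) := by
  rw [Fin.sum_univ_succ]
  simp

lemma walk_lin (ε : V → ℝ) (m : ℕ) :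
    dd * ∑ f : Fin m → V, (∑ i, ε (f i)) = (m:ℝ) * dd ^ m * (∑ s, ε s) := by
  induction m with
  | zero => simp
  | succ m ih =>
    have step : ∑ f : Fin (m+1) → V, (∑ i, ε (f i))
        = dd ^ m * (∑ s, ε s) + dd * ∑ f : Fin m → V, (∑ i, ε (f i)) := by
      rw [sum_pi_cons m (fun f => ∑ i, ε (f i))]
      calc ∑ s : V, ∑ f : Fin m → V, (∑ i : Fin (m+1), ε ((Fin.cons s f : Fin (m+1) → V) i))
          = ∑ s : V, ∑ f : Fin m → V, (ε s + ∑ i, ε (f i)) :=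
            Finset.sum_congr rfl fun s _ => Finset.sum_congr rfl fun f _ => cons_split ε m s f
        _ = ∑ s : V, (dd^m * ε s + ∑ f : Fin m → V, ∑ i, ε (f i)) := by
            refine Finset.sum_congr rfl fun s _ => ?_
            rw [Finset.sum_add_distrib, Finset.sum_const, Finset.card_univ, card_fun_fin]
            push_cast
            ring
        _ = _ := by
            rw [Finset.sum_add_distrib, ← Finset.mul_sum, Finset.sum_const, Finset.card_univ,
              nsmul_eq_mul]
    rw [step]
    push_cast
    linear_combination dd * ih

lemma walk_sq (ε : V → ℝ) (hε : ∑ s, ε s = 0) (m : ℕ) :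
    dd * ∑ f : Fin m → V, (∑ i, ε (f i))^2 = (m:ℝ) * dd ^ m * (∑ s, ε s ^ 2) := by
  induction m with
  | zero => simp
  | succ m ih =>
    have hlin := walk_lin ε m
    rw [hε, mul_zero] at hlin
    have step : ∑ f : Fin (m+1) → V, (∑ i, ε (f i))^2
        = dd ^ m * (∑ s, ε s ^ 2) + dd * ∑ f : Fin m → V, (∑ i, ε (f i))^2 := by
      rw [sum_pi_cons m (fun f => (∑ i, ε (f i))^2)]
      calc ∑ s : V, ∑ f : Fin m → V, (∑ i : Fin (m+1), ε ((Fin.cons s f : Fin (m+1) → V) i))^2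
          = ∑ s : V, ∑ f : Fin m → V, (ε s + ∑ i, ε (f i))^2 :=
            Finset.sum_congr rfl fun s _ => Finset.sum_congr rfl fun f _ => by rw [cons_split ε m s f]
        _ = ∑ s : V, (dd^m * ε s ^ 2
              + (2 * ε s) * (∑ f : Fin m → V, ∑ i, ε (f i))
              + ∑ f : Fin m → V, (∑ i, ε (f i))^2) := by
            refine Finset.sum_congr rfl fun s _ => ?_
            have expand : ∀ f : Fin m → V, (ε s + ∑ i, ε (f i))^2
                = ε s ^ 2 + (2 * ε s) * (∑ i, ε (f i)) + (∑ i, ε (f i))^2 := fun f => by ring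
            simp only [expand]
            rw [Finset.sum_add_distrib, Finset.sum_add_distrib, Finset.sum_const,
              Finset.card_univ, card_fun_fin, ← Finset.mul_sum]
            push_cast
            ring
        _ = _ := by
            rw [Finset.sum_add_distrib, Finset.sum_add_distrib, ← Finset.mul_sum,
              Finset.sum_const, Finset.card_univ, nsmul_eq_mul]
            have hmid : ∑ s : V, (2 * ε s) * (∑ f : Fin m → V, ∑ i, ε (f i))
                = 2 * (∑ f : Fin m → V, ∑ i, ε (f i)) * (∑ s, ε s) := by
              rw [← Finset.sum_mul, ← Finset.mul_sum]
              ring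
            rw [hmid, hε]
            ring
    rw [step]
    push_cast
    linear_combination dd * ih

lemma card_filter_real {m : ℕ} (s : V) (f : Fin m → V) :
    (((univ.filter (fun i => f i = s)).card : ℕ) : ℝ) = ∑ i, (if f i = s then (1:ℝ) else 0) := by
  rw [Finset.card_filter]
  push_cast
  rfl

variable [Nonempty V]

lemma dd_pos : 0 < dd := by exact_mod_cast Fintype.card_pos

lemma pair_abs_bound (s₁ s₂ : V) (hne : s₁ ≠ s₂) (m : ℕ) :
    ∑ f : Fin m → V, |(((univ.filter (fun i => f i = s₁)).card : ℕ) : ℝ)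
        - (((univ.filter (fun i => f i = s₂)).card : ℕ) : ℝ)|
      ≤ dd ^ m * Real.sqrt (2 * m / dd) := by
  set ε : V → ℝ := fun x => (if x = s₁ then (1:ℝ) else 0) - (if x = s₂ then 1 else 0) with hε_def
  have hε : ∑ s, ε s = 0 := by
    simp only [hε_def, Finset.sum_sub_distrib, Finset.sum_ite_eq', Finset.mem_univ, if_true,
      sub_self]
  have hε2 : ∑ s, ε s ^ 2 = 2 := by
    have : ∀ s : V, ε s ^ 2 = (if s = s₁ then (1:ℝ) else 0) + (if s = s₂ then 1 else 0) := by
      intro s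
      simp only [hε_def]
      by_cases h1 : s = s₁ <;> by_cases h2 : s = s₂
      · exact absurd (h1.symm.trans h2) hne
      · subst h1; simp [hne]
      · subst h2; simp [Ne.symm hne]
      · simp [h1, h2]
    simp only [this, Finset.sum_add_distrib, Finset.sum_ite_eq', Finset.mem_univ, if_true]
    norm_num
  set Z : (Fin m → V) → ℝ := fun f => ∑ i, ε (f i) with hZ_def
  have hZ_eq : ∀ f : Fin m → V,
      (((univ.filter (fun i => f i = s₁)).card : ℕ) : ℝ)
        - (((univ.filter (fun i => f i = s₂)).card : ℕ) : ℝ) = Z f := by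
    intro f
    rw [card_filter_real, card_filter_real, hZ_def]
    simp only [hε_def]
    rw [Finset.sum_sub_distrib]
  have hsq : ∑ f : Fin m → V, Z f ^ 2 = (m:ℝ) * dd ^ m * 2 / dd := by
    have h := walk_sq ε hε m
    rw [hε2] at h
    field_simp
    linarith [h]
  have hcs := Finset.sum_mul_sq_le_sq_mul_sq univ (fun f : Fin m → V => |Z f|) (fun _ => (1:ℝ))
  simp only [mul_one, one_pow, Finset.sum_const, Finset.card_univ, card_fun_fin, sq_abs,
    nsmul_eq_mul] at hcs
  have hA : (0:ℝ) ≤ ∑ f : Fin m → V, |Z f| := Finset.sum_nonneg fun f _ => abs_nonneg _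
  have hB : (∑ f : Fin m → V, |Z f|)^2 ≤ dd^(2*m) * (2 * m / dd) := by
    calc (∑ f : Fin m → V, |Z f|)^2 ≤ (∑ f : Fin m → V, Z f ^2) * (Fintype.card V ^ m : ℕ) := hcs
      _ = ((m:ℝ) * dd ^ m * 2 / dd) * dd ^ m := by rw [hsq]; push_cast; ring
      _ = dd^(2*m) * (2 * m / dd) := by rw [two_mul, pow_add]; ring
  simp only [hZ_eq]
  calc ∑ f : Fin m → V, |Z f|
      = Real.sqrt ((∑ f : Fin m → V, |Z f|)^2) := (Real.sqrt_sq hA).symm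
    _ ≤ Real.sqrt (dd^(2*m) * (2 * m / dd)) := Real.sqrt_le_sqrt hB
    _ = dd ^ m * Real.sqrt (2 * m / dd) := by
        rw [Real.sqrt_mul (by positivity), two_mul, pow_add, Real.sqrt_mul_self (by positivity)]

lemma parity_sum_bound (s₀ : V) (m : ℕ) :
    ∑ f : Fin m → V, ((((univ.filter (fun i => f i = s₀)).card % 2 : ℕ)) : ℝ)
      ≤ dd ^ m * Real.sqrt (2 * m / dd) := by
  have hd : 0 < dd := dd_pos
  rcases le_or_gt (m : ℝ) dd with hm | hm
  · have hlin := walk_lin (fun x => if x = s₀ then (1:ℝ) else 0) m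
    have h1 : ∑ s : V, (if s = s₀ then (1:ℝ) else 0) = 1 := by
      rw [Finset.sum_ite_eq', if_pos (Finset.mem_univ _)]
    rw [h1, mul_one] at hlin
    have hle : ∑ f : Fin m → V, ((((univ.filter (fun i => f i = s₀)).card % 2 : ℕ)) : ℝ)
        ≤ ∑ f : Fin m → V, (((univ.filter (fun i => f i = s₀)).card : ℕ) : ℝ) := by
      refine Finset.sum_le_sum fun f _ => ?_
      exact_mod_cast Nat.mod_le _ _
    have heq : ∑ f : Fin m → V, (((univ.filter (fun i => f i = s₀)).card : ℕ) : ℝ)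
        = (m:ℝ) * dd ^ m / dd := by
      have : ∑ f : Fin m → V, (((univ.filter (fun i => f i = s₀)).card : ℕ) : ℝ)
          = ∑ f : Fin m → V, ∑ i, (if f i = s₀ then (1:ℝ) else 0) := by
        exact Finset.sum_congr rfl fun f _ => card_filter_real s₀ f
      field_simp
      linear_combination (Fintype.card V : ℝ) * this + hlin
    have hx : (m:ℝ) / dd ≤ Real.sqrt (2 * m / dd) := by
      have h0 : (0:ℝ) ≤ (m:ℝ)/dd := by positivity
      have hxx : (m:ℝ)/dd ≤ 1 := by rw [div_le_one hd]; exact hm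
      have hsq : ((m:ℝ)/dd)^2 ≤ 2 * m / dd := by
        rw [show (2:ℝ) * m / dd = 2 * ((m:ℝ)/dd) by ring]
        nlinarith
      calc (m:ℝ)/dd = Real.sqrt (((m:ℝ)/dd)^2) := (Real.sqrt_sq h0).symm
        _ ≤ Real.sqrt (2 * m / dd) := Real.sqrt_le_sqrt hsq
    calc ∑ f : Fin m → V, ((((univ.filter (fun i => f i = s₀)).card % 2 : ℕ)) : ℝ)
        ≤ (m:ℝ) * dd ^ m / dd := by rw [← heq]; exact hle
      _ = dd ^ m * ((m:ℝ)/dd) := by ring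
      _ ≤ dd ^ m * Real.sqrt (2 * m / dd) := by
          apply mul_le_mul_of_nonneg_left hx (by positivity)
  · have hle : ∑ f : Fin m → V, ((((univ.filter (fun i => f i = s₀)).card % 2 : ℕ)) : ℝ)
        ≤ ∑ _f : Fin m → V, (1:ℝ) := by
      refine Finset.sum_le_sum fun f _ => ?_
      have := Nat.mod_lt ((univ.filter (fun i => f i = s₀)).card) (show 0 < 2 by norm_num)
      exact_mod_cast Nat.lt_succ_iff.mp this
    rw [Finset.sum_const, Finset.card_univ, card_fun_fin, nsmul_eq_mul, mul_one] at hle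
    push_cast at hle
    have h1 : (1:ℝ) ≤ Real.sqrt (2 * m / dd) := by
      rw [show (1:ℝ) = Real.sqrt 1 from (Real.sqrt_one).symm]
      apply Real.sqrt_le_sqrt
      rw [le_div_iff₀ hd]
      nlinarith
    calc ∑ f : Fin m → V, ((((univ.filter (fun i => f i = s₀)).card % 2 : ℕ)) : ℝ)
        ≤ dd ^ m := hle
      _ = dd ^ m * 1 := by ring
      _ ≤ dd ^ m * Real.sqrt (2 * m / dd) := by
          apply mul_le_mul_of_nonneg_left h1 (by positivity)

end walks

section pf
variable {Γ : Type*} [AddCommGroup Γ] [Fintype Γ] [DecidableEq Γ]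
variable {V : Type*} [Fintype V] [DecidableEq V]
variable (S : Multiset Γ) (v : V → Γ)

lemma walk_decomp (m : ℕ) (f : Fin m → V) :
    (∑ i, v (f i)) = ∑ s : V, ((univ.filter (fun i => f i = s)).card) • v s := by
  calc ∑ i, v (f i) = ∑ i : Fin m, ∑ s : V, (if f i = s then v s else 0) := by
        refine Finset.sum_congr rfl fun i _ => ?_
        rw [Finset.sum_ite_eq Finset.univ (f i) v]
        simp
    _ = ∑ s : V, ∑ i : Fin m, (if f i = s then v s else 0) := Finset.sum_comm
    _ = ∑ s : V, ((univ.filter (fun i => f i = s)).card) • v s := by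
        refine Finset.sum_congr rfl fun s _ => ?_
        rw [← Finset.sum_filter, Finset.sum_const]

lemma power_formula (hv : ∀ g : Γ, (∑ s : V, if v s = g then (1:ℝ) else 0) = (S.count g : ℝ))
    (m : ℕ) (x y : Γ) :
    (cayleyAdj S ^ m) x y
      = (∑ f : Fin m → V, if (∑ i, v (f i)) = y - x then (1:ℝ) else 0)
        / (Multiset.card S : ℝ)^m := by
  induction m generalizing x y with
  | zero =>
    rw [pow_zero, pow_zero, div_one]
    have hsum : ∑ f : Fin 0 → V, (if (∑ i, v (f i)) = y - x then (1:ℝ) else 0)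
        = if (0 : Γ) = y - x then (1:ℝ) else 0 := by
      rw [Fintype.sum_unique]
      simp
    rw [hsum, Matrix.one_apply]
    by_cases h : x = y
    · simp [h]
    · have : ¬ ((0:Γ) = y - x) := fun hh => h (by rw [eq_comm, sub_eq_zero] at hh; exact hh.symm)
      simp [h, this]
  | succ m ih =>
    rw [pow_succ']
    rw [Matrix.mul_apply]
    have hA : ∀ z : Γ, cayleyAdj S x z = (∑ s : V, if v s = z - x then (1:ℝ) else 0)
        / (Multiset.card S : ℝ) := by
      intro z
      rw [hv]
      rfl
    calc ∑ z : Γ, cayleyAdj S x z * (cayleyAdj S ^ m) z y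
        = ∑ z : Γ, ((∑ s : V, if v s = z - x then (1:ℝ) else 0)
            * (∑ f : Fin m → V, if (∑ i, v (f i)) = y - z then (1:ℝ) else 0))
            / ((Multiset.card S : ℝ) * (Multiset.card S : ℝ)^m) := by
          refine Finset.sum_congr rfl fun z _ => ?_
          rw [hA z, ih z y]
          ring
      _ = (∑ z : Γ, (∑ s : V, if v s = z - x then (1:ℝ) else 0)
            * (∑ f : Fin m → V, if (∑ i, v (f i)) = y - z then (1:ℝ) else 0))
            / (Multiset.card S : ℝ)^(m+1) := by
          rw [← Finset.sum_div, pow_succ]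
          ring_nf
      _ = (∑ f : Fin (m+1) → V, if (∑ i, v (f i)) = y - x then (1:ℝ) else 0)
            / (Multiset.card S : ℝ)^(m+1) := by
          congr 1
          rw [sum_pi_cons m (fun f => if (∑ i, v (f i)) = y - x then (1:ℝ) else 0)]
          calc ∑ z : Γ, (∑ s : V, if v s = z - x then (1:ℝ) else 0)
                * (∑ f : Fin m → V, if (∑ i, v (f i)) = y - z then (1:ℝ) else 0)
              = ∑ z : Γ, ∑ s : V, ∑ f : Fin m → V,
                  (if v s = z - x then (1:ℝ) else 0) * (if (∑ i, v (f i)) = y - z then (1:ℝ) else 0) := by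
                refine Finset.sum_congr rfl fun z _ => ?_
                rw [Finset.sum_mul_sum]
            _ = ∑ s : V, ∑ f : Fin m → V, ∑ z : Γ,
                  (if v s = z - x then (1:ℝ) else 0) * (if (∑ i, v (f i)) = y - z then (1:ℝ) else 0) := by
                rw [Finset.sum_comm]
                refine Finset.sum_congr rfl fun s _ => Finset.sum_comm
            _ = ∑ s : V, ∑ f : Fin m → V,
                  (if (∑ i, v (f i)) = y - (x + v s) then (1:ℝ) else 0) := by
                refine Finset.sum_congr rfl fun s _ => Finset.sum_congr rfl fun f _ => ?_
                have hcond : ∀ z : Γ, (v s = z - x) = (z = x + v s) := by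
                  intro z
                  apply propext
                  constructor
                  · intro h; rw [h]; abel
                  · intro h; rw [h]; abel
                simp only [hcond, boole_mul]
                rw [Finset.sum_ite_eq' Finset.univ (x + v s)
                  (fun z => if (∑ i, v (f i)) = y - z then (1:ℝ) else 0)]
                simp
            _ = ∑ s : V, ∑ f : Fin m → V,
                  (if (∑ i : Fin (m+1), v ((Fin.cons s f : Fin (m+1) → V) i)) = y - x then (1:ℝ) else 0) := by
                refine Finset.sum_congr rfl fun s _ => Finset.sum_congr rfl fun f _ => ?_
                rw [cons_split v m s f]
                congr 1
                apply propext
                constructor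
                · intro h; rw [h]; abel
                · intro h
                  have : (∑ i, v (f i)) = (v s + ∑ i, v (f i)) - v s := by abel
                  rw [this, h]; abel

lemma qf_formula (hv : ∀ g : Γ, (∑ s : V, if v s = g then (1:ℝ) else 0) = (S.count g : ℝ))
    (Q : Finset Γ) (m : ℕ) (hcard : Fintype.card V = Multiset.card S)
    (hS0 : (Multiset.card S : ℝ) ≠ 0) :
    dotProduct (indVec Q) (((1 : Matrix Γ Γ ℝ) - cayleyAdj S ^ m).mulVec (indVec Q))
      = (∑ f : Fin m → V, (bnd Q (∑ i, v (f i)) : ℝ)) / (Multiset.card S : ℝ)^m := by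
  classical
  rw [dotProduct]
  have hmv : ∀ x : Γ, ((1 : Matrix Γ Γ ℝ) - cayleyAdj S ^ m).mulVec (indVec Q) x
      = indVec Q x - (∑ f : Fin m → V, indVec Q (x + ∑ i, v (f i))) / (Multiset.card S : ℝ)^m := by
    intro x
    rw [Matrix.mulVec, dotProduct]
    have : ∀ y : Γ, ((1 : Matrix Γ Γ ℝ) - cayleyAdj S ^ m) x y * indVec Q y
        = (if x = y then (1:ℝ) else 0) * indVec Q y - (cayleyAdj S ^ m) x y * indVec Q y := by
      intro y
      rw [Matrix.sub_apply, Matrix.one_apply]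
      ring
    simp only [this]
    rw [Finset.sum_sub_distrib]
    congr 1
    · simp only [boole_mul]
      rw [Finset.sum_ite_eq Finset.univ x (fun y => indVec Q y)]
      simp
    · calc ∑ y : Γ, (cayleyAdj S ^ m) x y * indVec Q y
          = ∑ y : Γ, (∑ f : Fin m → V, if (∑ i, v (f i)) = y - x then (1:ℝ) else 0)
              * indVec Q y / (Multiset.card S : ℝ)^m := by
            refine Finset.sum_congr rfl fun y _ => ?_
            rw [power_formula S v hv m x y]
            ring
        _ = (∑ y : Γ, ∑ f : Fin m → V,
              (if (∑ i, v (f i)) = y - x then (1:ℝ) else 0) * indVec Q y) / (Multiset.card S : ℝ)^m := by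
            rw [← Finset.sum_div]
            congr 1
            refine Finset.sum_congr rfl fun y _ => ?_
            rw [Finset.sum_mul]
        _ = (∑ f : Fin m → V, indVec Q (x + ∑ i, v (f i))) / (Multiset.card S : ℝ)^m := by
            congr 1
            rw [Finset.sum_comm]
            refine Finset.sum_congr rfl fun f _ => ?_
            have hcond : ∀ y : Γ, ((∑ i, v (f i)) = y - x) = (y = x + ∑ i, v (f i)) := by
              intro y
              apply propext
              constructor
              · intro h; rw [h]; abel
              · intro h; rw [h]; abel
            simp only [hcond, boole_mul]
            rw [Finset.sum_ite_eq' Finset.univ (x + ∑ i, v (f i)) (fun y => indVec Q y)]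
            simp
  simp only [hmv]
  have hx : ∀ x : Γ, indVec Q x * (indVec Q x - (∑ f : Fin m → V, indVec Q (x + ∑ i, v (f i))) / (Multiset.card S : ℝ)^m)
      = (if x ∈ Q then (1 - (∑ f : Fin m → V, indVec Q (x + ∑ i, v (f i))) / (Multiset.card S : ℝ)^m) else 0) := by
    intro x
    unfold indVec
    by_cases h : x ∈ Q <;> simp [h]
  simp only [hx]
  rw [Finset.sum_ite_mem, Finset.univ_inter]
  have hcount : ∀ g : Γ, ∑ x ∈ Q, (1 - indVec Q (x + g)) = (bnd Q g : ℝ) := by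
    intro g
    unfold bnd
    rw [Finset.card_filter]
    push_cast
    refine Finset.sum_congr rfl fun x _ => ?_
    unfold indVec
    by_cases h : x + g ∈ Q <;> simp [h]
  calc ∑ x ∈ Q, (1 - (∑ f : Fin m → V, indVec Q (x + ∑ i, v (f i))) / (Multiset.card S : ℝ)^m)
      = ∑ x ∈ Q, (∑ f : Fin m → V, (1 - indVec Q (x + ∑ i, v (f i)))) / (Multiset.card S : ℝ)^m := by
        refine Finset.sum_congr rfl fun x _ => ?_
        rw [Finset.sum_sub_distrib, Finset.sum_const, Finset.card_univ, Fintype.card_fun,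
          Fintype.card_fin, hcard, sub_div, nsmul_eq_mul, mul_one]
        push_cast
        rw [div_self (pow_ne_zero m hS0)]
    _ = (∑ f : Fin m → V, (bnd Q (∑ i, v (f i)) : ℝ)) / (Multiset.card S : ℝ)^m := by
        rw [← Finset.sum_div]
        congr 1
        rw [Finset.sum_comm]
        exact Finset.sum_congr rfl fun f _ => hcount _

end pf


section core
variable {Γ : Type*} [AddCommGroup Γ] [Fintype Γ] [DecidableEq Γ]

lemma sum_bnd_walk_le (Q : Finset Γ) (a b : ℕ) (gT : Fin a → Γ) (gU : Fin b → Γ)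
    (hgU : ∀ j, gU j + gU j = 0) (m : ℕ) (hab : 0 < a + a + b) :
    ∑ f : Fin m → ((Fin a ⊕ Fin a) ⊕ Fin b),
        (bnd Q (∑ i, Sum.elim (Sum.elim gT (fun j => -(gT j))) gU (f i)) : ℝ)
      ≤ ((a + a + b : ℕ) : ℝ)^m * Real.sqrt (2 * m / ((a + a + b : ℕ) : ℝ))
        * ((∑ j : Fin a, ((bnd Q (gT j) : ℝ) + (bnd Q (-(gT j)) : ℝ)))
           + ∑ j : Fin b, (bnd Q (gU j) : ℝ)) := by
  classical
  set v : (Fin a ⊕ Fin a) ⊕ Fin b → Γ :=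
    Sum.elim (Sum.elim gT (fun j => -(gT j))) gU with hv_def
  have hcV : Fintype.card ((Fin a ⊕ Fin a) ⊕ Fin b) = a + a + b := by
    simp [Fintype.card_sum]
  haveI : Nonempty ((Fin a ⊕ Fin a) ⊕ Fin b) := by
    rw [← Fintype.card_pos_iff, hcV]
    exact hab
  have hWf : ∀ f : Fin m → ((Fin a ⊕ Fin a) ⊕ Fin b), (∑ i, v (f i))
      = (∑ j : Fin a,
          ((((univ.filter (fun i => f i = Sum.inl (Sum.inl j))).card : ℤ)
            - ((univ.filter (fun i => f i = Sum.inl (Sum.inr j))).card : ℤ)) • gT j))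
        + ∑ j : Fin b,
            ((univ.filter (fun i => f i = Sum.inr j)).card) • gU j := by
    intro f
    rw [walk_decomp v m f, Fintype.sum_sum_type, Fintype.sum_sum_type, ← Finset.sum_add_distrib]
    congr 1
    refine Finset.sum_congr rfl fun j _ => ?_
    simp only [hv_def, Sum.elim_inl, Sum.elim_inr]
    rw [sub_zsmul, natCast_zsmul, natCast_zsmul, smul_neg]
  have hperf : ∀ f : Fin m → ((Fin a ⊕ Fin a) ⊕ Fin b), (bnd Q (∑ i, v (f i)) : ℝ)
      ≤ (∑ j : Fin a,
            |(((univ.filter (fun i => f i = Sum.inl (Sum.inl j))).card : ℕ) : ℝ)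
              - (((univ.filter (fun i => f i = Sum.inl (Sum.inr j))).card : ℕ) : ℝ)|
            * ((bnd Q (gT j) : ℝ) + (bnd Q (-(gT j)) : ℝ)))
        + ∑ j : Fin b,
            ((((univ.filter (fun i => f i = Sum.inr j)).card % 2 : ℕ)) : ℝ)
            * (bnd Q (gU j) : ℝ) := by
    intro f
    rw [hWf f]
    have h1 : (bnd Q ((∑ j : Fin a,
          ((((univ.filter (fun i => f i = Sum.inl (Sum.inl j))).card : ℤ)
            - ((univ.filter (fun i => f i = Sum.inl (Sum.inr j))).card : ℤ)) • gT j))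
        + ∑ j : Fin b, ((univ.filter (fun i => f i = Sum.inr j)).card) • gU j) : ℝ)
        ≤ (bnd Q (∑ j : Fin a,
          ((((univ.filter (fun i => f i = Sum.inl (Sum.inl j))).card : ℤ)
            - ((univ.filter (fun i => f i = Sum.inl (Sum.inr j))).card : ℤ)) • gT j)) : ℝ)
          + (bnd Q (∑ j : Fin b, ((univ.filter (fun i => f i = Sum.inr j)).card) • gU j) : ℝ) := by
      exact_mod_cast bnd_add_le Q _ _
    refine h1.trans (add_le_add ?_ ?_)
    · refine (bnd_sum_le Q univ _).trans (Finset.sum_le_sum fun j _ => ?_)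
      refine (bnd_zsmul_le Q _ _).trans ?_
      apply mul_le_mul_of_nonneg_right _ (by positivity)
      apply le_of_eq
      push_cast
      rfl
    · refine (bnd_sum_le Q univ _).trans (Finset.sum_le_sum fun j _ => ?_)
      exact bnd_parity_le Q _ _ (hgU j)
  calc ∑ f : Fin m → ((Fin a ⊕ Fin a) ⊕ Fin b), (bnd Q (∑ i, v (f i)) : ℝ)
      ≤ ∑ f : Fin m → ((Fin a ⊕ Fin a) ⊕ Fin b),
          ((∑ j : Fin a,
            |(((univ.filter (fun i => f i = Sum.inl (Sum.inl j))).card : ℕ) : ℝ)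
              - (((univ.filter (fun i => f i = Sum.inl (Sum.inr j))).card : ℕ) : ℝ)|
            * ((bnd Q (gT j) : ℝ) + (bnd Q (-(gT j)) : ℝ)))
          + ∑ j : Fin b,
              ((((univ.filter (fun i => f i = Sum.inr j)).card % 2 : ℕ)) : ℝ)
              * (bnd Q (gU j) : ℝ)) := Finset.sum_le_sum fun f _ => hperf f
    _ = (∑ j : Fin a,
          (∑ f : Fin m → ((Fin a ⊕ Fin a) ⊕ Fin b),
            |(((univ.filter (fun i => f i = Sum.inl (Sum.inl j))).card : ℕ) : ℝ)
              - (((univ.filter (fun i => f i = Sum.inl (Sum.inr j))).card : ℕ) : ℝ)|)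
          * ((bnd Q (gT j) : ℝ) + (bnd Q (-(gT j)) : ℝ)))
        + ∑ j : Fin b,
            (∑ f : Fin m → ((Fin a ⊕ Fin a) ⊕ Fin b),
              ((((univ.filter (fun i => f i = Sum.inr j)).card % 2 : ℕ)) : ℝ))
            * (bnd Q (gU j) : ℝ) := by
        rw [Finset.sum_add_distrib]
        congr 1
        · rw [Finset.sum_comm]
          exact Finset.sum_congr rfl fun j _ => by rw [Finset.sum_mul]
        · rw [Finset.sum_comm]
          exact Finset.sum_congr rfl fun j _ => by rw [Finset.sum_mul]
    _ ≤ (∑ j : Fin a,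
          (((a + a + b : ℕ) : ℝ)^m * Real.sqrt (2 * m / ((a + a + b : ℕ) : ℝ)))
          * ((bnd Q (gT j) : ℝ) + (bnd Q (-(gT j)) : ℝ)))
        + ∑ j : Fin b,
          (((a + a + b : ℕ) : ℝ)^m * Real.sqrt (2 * m / ((a + a + b : ℕ) : ℝ)))
          * (bnd Q (gU j) : ℝ) := by
        refine add_le_add (Finset.sum_le_sum fun j _ => ?_) (Finset.sum_le_sum fun j _ => ?_)
        · refine mul_le_mul_of_nonneg_right ?_ (by positivity)
          have h := pair_abs_bound (Sum.inl (Sum.inl j) : (Fin a ⊕ Fin a) ⊕ Fin b)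
            (Sum.inl (Sum.inr j)) (by simp) m
          rwa [hcV] at h
        · refine mul_le_mul_of_nonneg_right ?_ (by positivity)
          have h := parity_sum_bound (Sum.inr j : (Fin a ⊕ Fin a) ⊕ Fin b) m
          rwa [hcV] at h
    _ = _ := by
        rw [← Finset.mul_sum, ← Finset.mul_sum, ← mul_add]

end core

/-- **combinatorial Buser inequality.** Let `G = Cay(Γ, S)` be an Abelian
Cayley graph of degree `d = |S|` with normalized adjacency matrix `A`. For every nonempty
`Q ⊆ Γ` and `t ≥ 0`, the conductance of `Q` in the power graph `G^(2t)`, i.e. the Rayleigh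
quotient `(1_Q^T (I − A^(2t)) 1_Q)/|Q|`, is at most `2·√(t·d)·φ_G(Q)`. -/
theorem power_graph_conductance_buser
    {Γ : Type*} [AddCommGroup Γ] [Fintype Γ] [DecidableEq Γ]
    (S : Multiset Γ) (hS : S ≠ 0) (hsym : ∀ x : Γ, S.count (-x) = S.count x)
    (Q : Finset Γ) (hQ : Q.Nonempty) (t : ℕ) :
    dotProduct (indVec Q)
        (((1 : Matrix Γ Γ ℝ) - cayleyAdj S ^ (2 * t)).mulVec (indVec Q)) / (Q.card : ℝ)
      ≤ 2 * Real.sqrt ((t : ℝ) * (Multiset.card S : ℝ)) * condSet S Q := by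
  classical
  obtain ⟨T, U, hTU, hU⟩ := exists_decomp S hsym
  set m := 2 * t with hm
  set tl := T.toList with htl
  set ul := U.toList with hul
  set gT : Fin tl.length → Γ := fun j => tl.get j with hgT_def
  set gU : Fin ul.length → Γ := fun j => ul.get j with hgU_def
  set v : (Fin tl.length ⊕ Fin tl.length) ⊕ Fin ul.length → Γ :=
    Sum.elim (Sum.elim gT (fun j => -(gT j))) gU with hv_def
  have hD0 : Multiset.card S ≠ 0 := fun h => hS (Multiset.card_eq_zero.mp h)
  have hDpos : (0:ℝ) < (Multiset.card S : ℝ) := by exact_mod_cast Nat.pos_of_ne_zero hD0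
  have hcT : ∀ g : Γ, Multiset.count g T = tl.count g := by
    intro g
    conv_lhs => rw [← Multiset.coe_toList T]
    rw [Multiset.coe_count]
  have hcU : ∀ g : Γ, Multiset.count g U = ul.count g := by
    intro g
    conv_lhs => rw [← Multiset.coe_toList U]
    rw [Multiset.coe_count]
  have hv : ∀ g : Γ, (∑ s : (Fin tl.length ⊕ Fin tl.length) ⊕ Fin ul.length,
      if v s = g then (1:ℝ) else 0) = (S.count g : ℝ) := by
    intro g
    rw [Fintype.sum_sum_type, Fintype.sum_sum_type]
    have e1 : ∑ j : Fin tl.length, (if v (Sum.inl (Sum.inl j)) = g then (1:ℝ) else 0)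
        = (tl.count g : ℝ) := by
      simp only [hv_def, Sum.elim_inl, hgT_def]
      exact list_sum_ite_count tl g
    have e2 : ∑ j : Fin tl.length, (if v (Sum.inl (Sum.inr j)) = g then (1:ℝ) else 0)
        = (tl.count (-g) : ℝ) := by
      simp only [hv_def, Sum.elim_inl, Sum.elim_inr, hgT_def, neg_eq_iff_eq_neg]
      exact list_sum_ite_count tl (-g)
    have e3 : ∑ j : Fin ul.length, (if v (Sum.inr j) = g then (1:ℝ) else 0)
        = (ul.count g : ℝ) := by
      simp only [hv_def, Sum.elim_inr, hgU_def]
      exact list_sum_ite_count ul g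
    rw [e1, e2, e3]
    have hcnt : S.count g = tl.count g + tl.count (-g) + ul.count g := by
      conv_lhs => rw [hTU]
      rw [Multiset.count_add, Multiset.count_add]
      have hmapc : Multiset.count g (T.map (fun x => -x)) = Multiset.count (-g) T := by
        have h := Multiset.count_map_eq_count' (fun x : Γ => -x) T neg_injective (-g)
        simpa using h
      rw [hmapc, hcT, hcT, hcU]
    rw [hcnt]
    push_cast
    ring
  have hTl : tl.length = Multiset.card T := Multiset.length_toList T
  have hUl : ul.length = Multiset.card U := Multiset.length_toList U
  have hSc : Multiset.card S = Multiset.card T + Multiset.card T + Multiset.card U := by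
    conv_lhs => rw [hTU]
    rw [Multiset.card_add, Multiset.card_add, Multiset.card_map]
  have hcard : Fintype.card ((Fin tl.length ⊕ Fin tl.length) ⊕ Fin ul.length)
      = Multiset.card S := by
    simp only [Fintype.card_sum, Fintype.card_fin]
    omega
  have hab : 0 < tl.length + tl.length + ul.length := by omega
  have hgU : ∀ j : Fin ul.length, gU j + gU j = 0 := by
    intro j
    refine hU (gU j) ?_
    rw [← Multiset.mem_toList]
    exact List.get_mem ul j
  have hqf := qf_formula S v hv Q m hcard (ne_of_gt hDpos)
  have hcore := sum_bnd_walk_le Q tl.length ul.length gT gU hgU m hab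
  have hcutN : ((∑ j : Fin tl.length, (bnd Q (gT j) + bnd Q (-(gT j))))
      + ∑ j : Fin ul.length, bnd Q (gU j)) = cutEdges S Q := by
    rw [cut_as_map S Q]
    conv_rhs => rw [hTU]
    rw [Multiset.map_add, Multiset.map_add, Multiset.sum_add, Multiset.sum_add,
      Multiset.map_map]
    have h1 : ∑ j : Fin tl.length, bnd Q (gT j) = (T.map (fun s => bnd Q s)).sum := by
      simp only [hgT_def]
      rw [list_sum_map_get tl (fun s => bnd Q s)]
      conv_rhs => rw [← Multiset.coe_toList T]
      rw [Multiset.map_coe, Multiset.sum_coe]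
    have h2 : ∑ j : Fin tl.length, bnd Q (-(gT j))
        = (T.map ((fun s => bnd Q s) ∘ (fun x => -x))).sum := by
      simp only [hgT_def, Function.comp]
      rw [list_sum_map_get tl (fun s => bnd Q (-s))]
      conv_rhs => rw [← Multiset.coe_toList T]
      rw [Multiset.map_coe, Multiset.sum_coe]
    have h3 : ∑ j : Fin ul.length, bnd Q (gU j) = (U.map (fun s => bnd Q s)).sum := by
      simp only [hgU_def]
      rw [list_sum_map_get ul (fun s => bnd Q s)]
      conv_rhs => rw [← Multiset.coe_toList U]
      rw [Multiset.map_coe, Multiset.sum_coe]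
    rw [Finset.sum_add_distrib, h1, h2, h3]
  have hcutR : (∑ j : Fin tl.length, ((bnd Q (gT j) : ℝ) + (bnd Q (-(gT j)) : ℝ)))
      + ∑ j : Fin ul.length, (bnd Q (gU j) : ℝ) = (cutEdges S Q : ℝ) := by
    rw [← hcutN]
    push_cast
    ring
  rw [hcutR] at hcore
  have haabb : ((tl.length + tl.length + ul.length : ℕ) : ℝ) = (Multiset.card S : ℝ) := by
    exact_mod_cast congrArg (Nat.cast : ℕ → ℝ) (by omega : tl.length + tl.length + ul.length = Multiset.card S)
  rw [haabb] at hcore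
  -- put things together
  rw [hqf]
  have hQpos : (0:ℝ) < (Q.card : ℝ) := by exact_mod_cast Finset.card_pos.mpr hQ
  have hcut0 : (0:ℝ) ≤ (cutEdges S Q : ℝ) := Nat.cast_nonneg _
  have hbound : (∑ f : Fin m → ((Fin tl.length ⊕ Fin tl.length) ⊕ Fin ul.length),
        (bnd Q (∑ i, v (f i)) : ℝ)) / (Multiset.card S : ℝ)^m
      ≤ Real.sqrt (2 * m / (Multiset.card S : ℝ)) * (cutEdges S Q : ℝ) := by
    rw [div_le_iff₀ (by positivity)]
    calc (∑ f : Fin m → ((Fin tl.length ⊕ Fin tl.length) ⊕ Fin ul.length),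
          (bnd Q (∑ i, v (f i)) : ℝ))
        ≤ (Multiset.card S : ℝ)^m * Real.sqrt (2 * m / (Multiset.card S : ℝ))
            * (cutEdges S Q : ℝ) := hcore
      _ = Real.sqrt (2 * m / (Multiset.card S : ℝ)) * (cutEdges S Q : ℝ)
            * (Multiset.card S : ℝ)^m := by ring
  have hfinal : Real.sqrt (2 * (m:ℝ) / (Multiset.card S : ℝ))
      = 2 * Real.sqrt ((t:ℝ) * (Multiset.card S : ℝ)) / (Multiset.card S : ℝ) := by
    have ht0 : (0:ℝ) ≤ (t:ℝ) * (Multiset.card S : ℝ) := by positivity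
    have hsqeq : 2 * (m:ℝ) / (Multiset.card S : ℝ)
        = (2 * Real.sqrt ((t:ℝ) * (Multiset.card S : ℝ)) / (Multiset.card S : ℝ))^2 := by
      rw [div_pow, mul_pow, Real.sq_sqrt ht0, hm]
      push_cast
      field_simp
    rw [hsqeq, Real.sqrt_sq (by positivity)]
  calc (∑ f : Fin m → ((Fin tl.length ⊕ Fin tl.length) ⊕ Fin ul.length),
        (bnd Q (∑ i, v (f i)) : ℝ)) / (Multiset.card S : ℝ)^m / (Q.card : ℝ)
      ≤ (Real.sqrt (2 * m / (Multiset.card S : ℝ)) * (cutEdges S Q : ℝ)) / (Q.card : ℝ) := by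
        gcongr
    _ = 2 * Real.sqrt ((t : ℝ) * (Multiset.card S : ℝ)) * condSet S Q := by
        rw [hfinal]
        unfold condSet
        field_simp
end

section
/- Let 0 ≤ ε < 1/8, let v ∈ ℝ^n be a unit vector, and let Q* ⊆ {1, …, n} be nonempty with |Q*| ≤ n/2. If ‖1̄_{Q*}/‖1̄_{Q*}‖ − v‖² ≤ ε, then the threshold set Q = {i ∈ {1,…,n} : v_i ≥ 1/(2·√(2|Q*|))} satisfies |Q △ Q*| ≤ 8ε·|Q|/(1 − 8ε). -/
/-- Centered indicator vector `1̄_Q = 1_Q − (|Q|/n)·1` of `Q ⊆ {1,…,n}`. -/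
noncomputable def centInd {n : ℕ} (Q : Finset (Fin n)) : EuclideanSpace ℝ (Fin n) :=
  WithLp.toLp 2 (fun x => (if x ∈ Q then (1 : ℝ) else 0) - (Q.card : ℝ) / (n : ℝ))

set_option maxHeartbeats 1600000 in
/-- **threshold rounding.** Let `0 ≤ ε < 1/8`, `v ∈ ℝⁿ` a unit vector and
`Q* ⊆ {1,…,n}` nonempty with `|Q*| ≤ n/2`. If `‖1̄_{Q*}/‖1̄_{Q*}‖ − v‖² ≤ ε`, then the
threshold set `Q = {i : v_i ≥ 1/(2√(2|Q*|))}` satisfies `|Q △ Q*| ≤ 8ε·|Q|/(1 − 8ε)`. -/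
theorem threshold_cut_close_to_optimal (n : ℕ) (ε : ℝ) (hε0 : 0 ≤ ε) (hε1 : ε < 1 / 8)
    (v : EuclideanSpace ℝ (Fin n)) (hv : ‖v‖ = 1)
    (Qstar : Finset (Fin n)) (hne : Qstar.Nonempty) (hhalf : 2 * Qstar.card ≤ n)
    (hclose : ‖(‖centInd Qstar‖⁻¹ • centInd Qstar) - v‖ ^ 2 ≤ ε) :
    ((symmDiff
        (Finset.univ.filter (fun i : Fin n =>
          1 / (2 * Real.sqrt (2 * (Qstar.card : ℝ))) ≤ v i)) Qstar).card : ℝ)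
      ≤ 8 * ε * ((Finset.univ.filter (fun i : Fin n =>
          1 / (2 * Real.sqrt (2 * (Qstar.card : ℝ))) ≤ v i)).card : ℝ) / (1 - 8 * ε) := by
  classical
  set k := Qstar.card with hkdef
  have hk0 : 0 < k := hne.card_pos
  have hn0 : 0 < n := lt_of_lt_of_le (by omega) hhalf
  have hkR : (0:ℝ) < k := by exact_mod_cast hk0
  have hnR : (0:ℝ) < n := by exact_mod_cast hn0
  have hhalfR : 2*(k:ℝ) ≤ n := by exact_mod_cast hhalf
  have hfrac : (k:ℝ)/n ≤ 1/2 := by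
    rw [div_le_div_iff₀ hnR two_pos]; linarith
  have hfrac0 : 0 < (k:ℝ)/n := by positivity
  set t := 1 / (2 * Real.sqrt (2 * (k : ℝ))) with htdef
  set Q := Finset.univ.filter (fun i : Fin n => t ≤ v i) with hQdef
  set s := Real.sqrt (2 * (k:ℝ)) with hsdef
  have hs0 : 0 < s := Real.sqrt_pos.mpr (by positivity)
  have hssq : s^2 = 2*(k:ℝ) := Real.sq_sqrt (by positivity)
  have ht0 : 0 < t := by rw [htdef]; positivity
  have htsq : t^2 = 1/(8*(k:ℝ)) := by
    rw [htdef, div_pow, mul_pow, hssq]; ring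
  set u := ‖centInd Qstar‖⁻¹ • centInd Qstar with hudef
  set N := ‖centInd Qstar‖ with hNdef
  -- norm squared of centered indicator
  have hnormsq : N^2 = (k:ℝ) * (1 - (k:ℝ)/n) := by
    rw [hNdef, EuclideanSpace.norm_eq, Real.sq_sqrt (by positivity)]
    have h1 : ∀ i : Fin n, ‖centInd Qstar i‖^2
        = (if i ∈ Qstar then (1:ℝ) - 2*((k:ℝ)/n) else 0) + ((k:ℝ)/n)^2 := by
      intro i
      rw [Real.norm_eq_abs, sq_abs]
      unfold centInd
      simp only [WithLp.ofLp_toLp]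
      split <;> ring
    rw [Finset.sum_congr rfl (fun i _ => h1 i), Finset.sum_add_distrib,
      Finset.sum_ite_mem, Finset.univ_inter, Finset.sum_const, Finset.sum_const,
      Finset.card_univ, Fintype.card_fin]
    simp only [nsmul_eq_mul]
    field_simp
    ring
  have hN0 : 0 < N := by
    have h2 : 0 < N^2 := by rw [hnormsq]; nlinarith
    have hN : 0 ≤ N := norm_nonneg _
    nlinarith
  have hNeq : N = Real.sqrt ((k:ℝ) * (1 - (k:ℝ)/n)) := by
    rw [← hnormsq, Real.sqrt_sq hN0.le]
  -- coordinate formulas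
  have hui : ∀ i : Fin n, u i = N⁻¹ * ((if i ∈ Qstar then (1:ℝ) else 0) - (k:ℝ)/n) := by
    intro i; rw [hudef]; rfl
  clear_value u N
  clear_value Q
  clear_value t s
  clear_value k
  clear hudef hNdef hNeq
  have hmem : ∀ i ∈ Qstar, 2*t ≤ u i := by
    intro i hi
    rw [hui i, if_pos hi, inv_mul_eq_div]
    have h2t : 2*t = 1/s := by rw [htdef]; field_simp
    have hNle : N ≤ s * (1 - (k:ℝ)/n) := by
      have hb0 : 0 ≤ s * (1 - (k:ℝ)/n) := mul_nonneg hs0.le (by linarith)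
      have hsq : N^2 ≤ (s * (1 - (k:ℝ)/n))^2 := by
        rw [hnormsq, mul_pow, hssq]; nlinarith
      nlinarith [hsq, hb0, hN0]
    rw [h2t, div_le_div_iff₀ hs0 hN0, one_mul, mul_comm]
    exact hNle
  have hnot : ∀ i ∉ Qstar, u i ≤ 0 := by
    intro i hi
    rw [hui i, if_neg hi]
    exact mul_nonpos_iff.mpr (Or.inl ⟨by positivity, by linarith⟩)
  -- per-coordinate bound on the symmetric difference
  have hcoord : ∀ i ∈ symmDiff Q Qstar, 1/(8*(k:ℝ)) ≤ (u i - v i)^2 := by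
    intro i hi
    rw [Finset.mem_symmDiff] at hi
    rw [← htsq]
    rcases hi with ⟨hiQ, hiS⟩ | ⟨hiS, hiQ⟩
    · -- i ∈ Q, i ∉ Qstar
      have hvt : t ≤ v i := by rw [hQdef] at hiQ; exact (Finset.mem_filter.mp hiQ).2
      have hu0 : u i ≤ 0 := hnot i hiS
      have h1 : t ≤ v i - u i := by linarith
      calc t^2 ≤ (v i - u i)^2 := pow_le_pow_left₀ ht0.le h1 2
        _ = (u i - v i)^2 := by ring
    · -- i ∈ Qstar, i ∉ Q
      have hvt : v i < t := by
        by_contra h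
        refine hiQ ?_
        rw [hQdef]
        exact Finset.mem_filter.mpr ⟨Finset.mem_univ i, le_of_not_gt h⟩
      have hu2 : 2*t ≤ u i := hmem i hiS
      have h1 : t ≤ u i - v i := by linarith
      exact pow_le_pow_left₀ ht0.le h1 2
  -- sum bound
  have hnormuv : ‖u - v‖^2 = ∑ i, (u i - v i)^2 := by
    rw [EuclideanSpace.norm_eq, Real.sq_sqrt (by positivity)]
    apply Finset.sum_congr rfl
    intro i _
    rw [Real.norm_eq_abs, sq_abs]
    congr 1
  have hsd : ((symmDiff Q Qstar).card : ℝ) * (1/(8*(k:ℝ))) ≤ ε := by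
    calc ((symmDiff Q Qstar).card : ℝ) * (1/(8*(k:ℝ)))
        = ∑ _i ∈ symmDiff Q Qstar, 1/(8*(k:ℝ)) := by
          rw [Finset.sum_const, nsmul_eq_mul]
      _ ≤ ∑ i ∈ symmDiff Q Qstar, (u i - v i)^2 :=
          Finset.sum_le_sum hcoord
      _ ≤ ∑ i, (u i - v i)^2 :=
          Finset.sum_le_sum_of_subset_of_nonneg (Finset.subset_univ _)
            (fun i _ _ => sq_nonneg _)
      _ = ‖u - v‖^2 := hnormuv.symm
      _ ≤ ε := hclose
  have hsd' : ((symmDiff Q Qstar).card : ℝ) ≤ 8 * ε * k := by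
    have h8k : (0:ℝ) < 8*k := by positivity
    rw [mul_one_div, div_le_iff₀ h8k] at hsd
    linarith
  -- cardinality bound : k ≤ |Q| + |Q △ Qstar|
  have hcardN : k ≤ Q.card + (symmDiff Q Qstar).card := by
    have hsub : Qstar ⊆ Q ∪ symmDiff Q Qstar := by
      intro i hi
      rcases em (i ∈ Q) with h | h
      · exact Finset.mem_union_left _ h
      · exact Finset.mem_union_right _
          (Finset.mem_symmDiff.mpr (Or.inr ⟨hi, h⟩))
    calc k = Qstar.card := hkdef
      _ ≤ (Q ∪ symmDiff Q Qstar).card := Finset.card_le_card hsub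
      _ ≤ Q.card + (symmDiff Q Qstar).card := Finset.card_union_le _ _
  have hcardR : (k:ℝ) ≤ (Q.card : ℝ) + ((symmDiff Q Qstar).card : ℝ) := by
    exact_mod_cast hcardN
  -- conclude
  rw [le_div_iff₀ (by linarith : (0:ℝ) < 1 - 8*ε)]
  nlinarith [hsd', hcardR, (by positivity : (0:ℝ) ≤ ((symmDiff Q Qstar).card : ℝ)),
    mul_le_mul_of_nonneg_left hcardR (by linarith : (0:ℝ) ≤ 8*ε)]
end

section
/- Let p be an odd prime, m ≥ 1, and let S be a nonempty finite symmetric multiset of elements of (ℤ/pℤ)^m. Let G = Cay((ℤ/pℤ)^m, S) and let G' = Cay((ℤ/pℤ)^m, S'), where S' is the multiset union of kS = {k·s : s ∈ S} over k = 1, 2, …, (p−1)/2, so |S'| = ((p−1)/2)·|S|. Then φ(G) ≤ φ(G') ≤ ((p+1)/4)·φ(G). -/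
open Matrix

/-- Conductance `φ` of `Cay(Γ, S)`: minimum of `φ(Q)` over nonempty `Q` with `|Q| ≤ |Γ|/2`. -/
noncomputable def condGraph {Γ : Type*} [AddCommGroup Γ] [Fintype Γ] [DecidableEq Γ]
    (S : Multiset Γ) : ℝ :=
  sInf {r : ℝ | ∃ Q : Finset Γ, Q.Nonempty ∧ 2 * Q.card ≤ Fintype.card Γ ∧ r = condSet S Q}

/-- The multiset `S' = ⋃_{k=1}^{(p−1)/2} kS`, the union of the dilates `kS = {k·s : s ∈ S}`
for `k = 1, …, (p−1)/2`, with multiplicities inherited from `S`. -/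
def expandGens {Γ : Type*} [AddCommGroup Γ] (p : ℕ) (S : Multiset Γ) : Multiset Γ :=
  (Finset.Icc 1 ((p - 1) / 2)).val.bind fun k => S.map fun s => k • s

section Helpers

set_option linter.unusedSectionVars false

variable {Γ : Type*} [AddCommGroup Γ] [Fintype Γ] [DecidableEq Γ]

lemma cutEdges_eq (S : Multiset Γ) (Q : Finset Γ) :
    cutEdges S Q = (S.map fun s => (Q.filter fun x => x + s ∉ Q).card).sum := by
  induction S using Multiset.induction with
  | empty => simp [cutEdges]
  | cons a S ih =>
    simp only [cutEdges, Multiset.filter_cons, Multiset.map_cons, Multiset.sum_cons,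
      Multiset.card_add] at *
    rw [Finset.sum_add_distrib, ih]
    congr 1
    simp [Finset.card_filter, apply_ite Multiset.card]

lemma filter_shift_le (Q : Finset Γ) (s : Γ) (k : ℕ) :
    (Q.filter fun x => x + k • s ∉ Q).card ≤ k * (Q.filter fun x => x + s ∉ Q).card := by
  rcases Nat.eq_zero_or_pos k with hk | hk
  · rw [hk]
    simp only [zero_smul, add_zero, Nat.zero_mul, Nat.le_zero, Finset.card_eq_zero]
    exact Finset.filter_false_of_mem fun x hx => not_not_intro hx
  have key : ∀ x : Γ, ∃ i, x + i • s ∉ Q ∨ i = k := fun x => ⟨k, Or.inr rfl⟩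
  set n : Γ → ℕ := fun x => Nat.find (key x) with hn
  have hmem : ∀ x ∈ Q.filter fun x => x + k • s ∉ Q, x + n x • s ∉ Q ∧ 1 ≤ n x ∧ n x ≤ k := by
    intro x hx
    rw [Finset.mem_filter] at hx
    have hle : n x ≤ k := Nat.find_le (Or.inr rfl)
    have hspec := Nat.find_spec (key x)
    have hout : x + n x • s ∉ Q := by
      rcases hspec with h | h
      · exact h
      · rw [show n x = k from h]; exact hx.2
    refine ⟨hout, ?_, hle⟩
    by_contra h
    push_neg at h
    have h0 : n x = 0 := by omega
    rcases hspec with h' | h'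
    · change x + n x • s ∉ Q at h'
      rw [h0, zero_smul, add_zero] at h'
      exact h' hx.1
    · change n x = k at h'
      omega
  have hprev : ∀ x ∈ Q.filter fun x => x + k • s ∉ Q, x + (n x - 1) • s ∈ Q := by
    intro x hx
    have h1 := (hmem x hx).2.1
    have := Nat.find_min (key x) (show n x - 1 < n x by omega)
    push_neg at this
    exact this.1
  calc (Q.filter fun x => x + k • s ∉ Q).card
      ≤ ((Q.filter fun x => x + s ∉ Q) ×ˢ Finset.range k).card := by
        apply Finset.card_le_card_of_injOn (fun x => (x + (n x - 1) • s, n x - 1))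
        · intro x hx
          obtain ⟨hout, h1, hle⟩ := hmem x hx
          rw [Finset.mem_coe, Finset.mem_product, Finset.mem_range, Finset.mem_filter]
          refine ⟨⟨hprev x hx, ?_⟩, by dsimp only; omega⟩
          have : x + (n x - 1) • s + s = x + n x • s := by
            rw [add_assoc, ← succ_nsmul]
            congr 2
            omega
          rw [this]; exact hout
        · intro x1 h1 x2 h2 heq
          simp only [Prod.mk.injEq] at heq
          have : (n x1 - 1) • s = (n x2 - 1) • s := by rw [heq.2]
          rw [this] at heq
          exact add_right_cancel heq.1
    _ = k * (Q.filter fun x => x + s ∉ Q).card := by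
        rw [Finset.card_product, Finset.card_range, mul_comm]

lemma cutEdges_nsmul_le (k : ℕ) (S : Multiset Γ) (Q : Finset Γ) :
    cutEdges (S.map fun s => k • s) Q ≤ k * cutEdges S Q := by
  rw [cutEdges_eq, cutEdges_eq, Multiset.map_map]
  induction S using Multiset.induction with
  | empty => simp
  | cons a S ih =>
    simp only [Multiset.map_cons, Multiset.sum_cons, Function.comp_apply] at *
    rw [mul_add]
    exact add_le_add (filter_shift_le Q a k) ih

lemma card_expandGens (p : ℕ) (S : Multiset Γ) :
    Multiset.card (expandGens p S) = (p - 1) / 2 * Multiset.card S := by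
  rw [expandGens, Multiset.card_bind]
  rw [show ((Finset.Icc 1 ((p - 1) / 2)).val.map (Multiset.card ∘ fun k =>
      S.map fun s => k • s)).sum
      = ∑ k ∈ Finset.Icc 1 ((p - 1) / 2), Multiset.card (S.map fun s => k • s) from rfl]
  simp [Nat.card_Icc]

lemma cutEdges_expand (p : ℕ) (S : Multiset Γ) (Q : Finset Γ) :
    cutEdges (expandGens p S) Q
      = ∑ k ∈ Finset.Icc 1 ((p - 1) / 2), cutEdges (S.map fun s => k • s) Q := by
  rw [cutEdges_eq, expandGens, Multiset.map_bind, Multiset.sum_bind]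
  rw [show (∑ k ∈ Finset.Icc 1 ((p - 1) / 2), cutEdges (S.map fun s => k • s) Q)
      = ((Finset.Icc 1 ((p - 1) / 2)).val.map fun k =>
          cutEdges (S.map fun s => k • s) Q).sum from rfl]
  congr 1
  apply Multiset.map_congr rfl
  intro k _
  rw [cutEdges_eq, Multiset.map_map]

lemma condSet_nonneg (S : Multiset Γ) (Q : Finset Γ) : 0 ≤ condSet S Q := by
  unfold condSet
  positivity

end Helpers

section FieldHelpers

set_option linter.unusedSectionVars false

variable {K : Type*} [Field K] {Γ : Type*} [AddCommGroup Γ] [Module K Γ]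
  [Fintype Γ] [DecidableEq Γ]

lemma smul_mem_image_iff (c : K) (hc : c ≠ 0) (Q : Finset Γ) (y : Γ) :
    y ∈ Q.image (fun x => c⁻¹ • x) ↔ c • y ∈ Q := by
  rw [Finset.mem_image]
  constructor
  · rintro ⟨x, hx, rfl⟩
    rwa [smul_smul, mul_inv_cancel₀ hc, one_smul]
  · intro h
    exact ⟨c • y, h, by rw [smul_smul, inv_mul_cancel₀ hc, one_smul]⟩

lemma cutEdges_dilate (c : K) (hc : c ≠ 0) (S : Multiset Γ) (Q : Finset Γ) :
    cutEdges (S.map fun s => c • s) Q = cutEdges S (Q.image fun x => c⁻¹ • x) := by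
  rw [cutEdges_eq, cutEdges_eq, Multiset.map_map]
  congr 1
  apply Multiset.map_congr rfl
  intro s _
  set Q' := Q.image fun x => c⁻¹ • x with hQ'
  show (Q.filter fun x => x + c • s ∉ Q).card = (Q'.filter fun y => y + s ∉ Q').card
  have himg : Q'.filter (fun y => y + s ∉ Q') =
      (Q.filter fun x => x + c • s ∉ Q).image (fun x => c⁻¹ • x) := by
    ext y
    rw [Finset.mem_filter, hQ', smul_mem_image_iff c hc, smul_mem_image_iff c hc,
      smul_mem_image_iff c hc, Finset.mem_filter, smul_add]
  rw [himg, Finset.card_image_of_injective _ (smul_right_injective Γ (inv_ne_zero hc))]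

lemma card_image_dilate (c : K) (hc : c ≠ 0) (Q : Finset Γ) :
    (Q.image fun x => c⁻¹ • x).card = Q.card :=
  Finset.card_image_of_injective _ (smul_right_injective Γ (inv_ne_zero hc))

end FieldHelpers

/-- Let `p` be an odd prime, `m ≥ 1`, and `S` a nonempty symmetric
multiset of elements of `(ℤ/pℤ)^m`. With `G = Cay((ℤ/pℤ)^m, S)` and
`G' = Cay((ℤ/pℤ)^m, S')` where `S' = ⋃_{k=1}^{(p−1)/2} kS`, one has
`φ(G) ≤ φ(G') ≤ ((p+1)/4)·φ(G)`. -/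
theorem conductance_comparison_expanded_generators
    (p : ℕ) [NeZero p] (hp : p.Prime) (hodd : Odd p) (m : ℕ) (hm : 1 ≤ m)
    (S : Multiset (Fin m → ZMod p)) (hS : S ≠ 0)
    (hsym : ∀ x : Fin m → ZMod p, S.count (-x) = S.count x) :
    condGraph S ≤ condGraph (expandGens p S) ∧
      condGraph (expandGens p S) ≤ ((p : ℝ) + 1) / 4 * condGraph S := by
  haveI := Fact.mk hp
  obtain ⟨c, hc⟩ := hodd
  have hp2 : 2 ≤ p := hp.two_le
  have hp3 : 3 ≤ p := by omega
  set t : ℕ := (p - 1) / 2 with htdef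
  have ht : t = c := by omega
  have ht1 : 1 ≤ t := by omega
  have htp : t < p := by omega
  have hcardS : 0 < Multiset.card S := Multiset.card_pos.mpr hS
  have hNcard : Fintype.card (Fin m → ZMod p) = p ^ m := by
    rw [Fintype.card_fun, ZMod.card, Fintype.card_fin]
  have hN2 : 2 ≤ Fintype.card (Fin m → ZMod p) := by
    rw [hNcard]
    calc 2 ≤ p ^ 1 := by rw [pow_one]; omega
      _ ≤ p ^ m := Nat.pow_le_pow_right (by omega) hm
  set T : Set ℝ := {r : ℝ | ∃ Q : Finset (Fin m → ZMod p), Q.Nonempty ∧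
    2 * Q.card ≤ Fintype.card (Fin m → ZMod p) ∧ r = condSet S Q} with hTdef
  set T' : Set ℝ := {r : ℝ | ∃ Q : Finset (Fin m → ZMod p), Q.Nonempty ∧
    2 * Q.card ≤ Fintype.card (Fin m → ZMod p) ∧ r = condSet (expandGens p S) Q} with hT'def
  have hTne : T.Nonempty := by
    refine ⟨condSet S {0}, {0}, Finset.singleton_nonempty 0, ?_, rfl⟩
    simpa using hN2
  have hT'ne : T'.Nonempty := by
    refine ⟨condSet (expandGens p S) {0}, {0}, Finset.singleton_nonempty 0, ?_, rfl⟩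
    simpa using hN2
  have hTbdd : BddBelow T := by
    refine ⟨0, fun r hr => ?_⟩
    obtain ⟨Q, _, _, rfl⟩ := hr
    exact condSet_nonneg S Q
  have hT'bdd : BddBelow T' := by
    refine ⟨0, fun r hr => ?_⟩
    obtain ⟨Q, _, _, rfl⟩ := hr
    exact condSet_nonneg (expandGens p S) Q
  have hTfin : T.Finite := by
    have hsub : T ⊆ (fun Q : Finset (Fin m → ZMod p) => condSet S Q) '' Set.univ := by
      rintro r ⟨Q, _, _, rfl⟩
      exact ⟨Q, trivial, rfl⟩
    exact (Set.finite_univ.image _).subset hsub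
  have hG : condGraph S = sInf T := rfl
  have hG' : condGraph (expandGens p S) = sInf T' := rfl
  -- The dilation step: for `1 ≤ k ≤ t`, `cutEdges (kS) Q = cutEdges S Q'` with `|Q'| = |Q|`.
  have hdilate : ∀ k ∈ Finset.Icc 1 t, ∀ Q : Finset (Fin m → ZMod p), Q.Nonempty →
      2 * Q.card ≤ Fintype.card (Fin m → ZMod p) →
      ∃ Q' : Finset (Fin m → ZMod p), Q'.Nonempty ∧
        2 * Q'.card ≤ Fintype.card (Fin m → ZMod p) ∧ Q'.card = Q.card ∧
        cutEdges (S.map fun s => k • s) Q = cutEdges S Q' := by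
    intro k hk Q hQne hQc
    rw [Finset.mem_Icc] at hk
    have hck : ((k : ZMod p)) ≠ 0 := by
      rw [Ne, ZMod.natCast_eq_zero_iff]
      intro hdvd
      have := Nat.le_of_dvd (by omega) hdvd
      omega
    have hmapeq : (S.map fun s => k • s) = S.map fun s => (k : ZMod p) • s :=
      Multiset.map_congr rfl fun s _ => (Nat.cast_smul_eq_nsmul (ZMod p) k s).symm
    refine ⟨Q.image fun x => ((k : ZMod p))⁻¹ • x, hQne.image _, ?_, ?_, ?_⟩
    · rw [card_image_dilate _ hck]; exact hQc
    · exact card_image_dilate _ hck Q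
    · rw [hmapeq]; exact cutEdges_dilate _ hck S Q
  have hq0 : ∀ Q : Finset (Fin m → ZMod p), Q.Nonempty →
      (0:ℝ) < (Multiset.card S : ℝ) * Q.card := by
    intro Q hQ
    have := hQ.card_pos
    positivity
  have hSpos : (0:ℝ) < Multiset.card S := by exact_mod_cast hcardS
  have htRpos : (0:ℝ) < (t : ℝ) := by exact_mod_cast ht1
  constructor
  · -- φ(G) ≤ φ(G')
    rw [hG, hG']
    apply le_csInf hT'ne
    rintro r ⟨Q, hQne, hQc, rfl⟩
    have hq := hq0 Q hQne
    have hbound : ∀ k ∈ Finset.Icc 1 t,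
        sInf T * ((Multiset.card S : ℝ) * Q.card)
          ≤ (cutEdges (S.map fun s => k • s) Q : ℝ) := by
      intro k hk
      obtain ⟨Q', hQ'ne, hQ'c, hQ'card, hcuteq⟩ := hdilate k hk Q hQne hQc
      have hmem : condSet S Q' ∈ T := ⟨Q', hQ'ne, hQ'c, rfl⟩
      have h3 : sInf T ≤ condSet S Q' := csInf_le hTbdd hmem
      calc sInf T * ((Multiset.card S : ℝ) * Q.card)
          ≤ condSet S Q' * ((Multiset.card S : ℝ) * Q.card) :=
            mul_le_mul_of_nonneg_right h3 hq.le
        _ = (cutEdges S Q' : ℝ) := by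
            rw [condSet, hQ'card]
            field_simp
        _ = (cutEdges (S.map fun s => k • s) Q : ℝ) := by rw [hcuteq]
    have hqpos : (0:ℝ) < Q.card := by exact_mod_cast hQne.card_pos
    rw [condSet, card_expandGens, ← htdef]
    rw [le_div_iff₀ (by push_cast; exact mul_pos (mul_pos htRpos hSpos) hqpos)]
    have hcut : (cutEdges (expandGens p S) Q : ℝ)
        = ∑ k ∈ Finset.Icc 1 t, (cutEdges (S.map fun s => k • s) Q : ℝ) := by
      rw [cutEdges_expand, ← htdef]
      push_cast
      rfl
    calc sInf T * ((t * Multiset.card S : ℕ) * (Q.card : ℝ))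
        = ∑ _k ∈ Finset.Icc 1 t, sInf T * ((Multiset.card S : ℝ) * Q.card) := by
          rw [Finset.sum_const, Nat.card_Icc, nsmul_eq_mul]
          push_cast
          ring
      _ ≤ ∑ k ∈ Finset.Icc 1 t, (cutEdges (S.map fun s => k • s) Q : ℝ) :=
          Finset.sum_le_sum hbound
      _ = (cutEdges (expandGens p S) Q : ℝ) := hcut.symm
  · -- φ(G') ≤ (p+1)/4 · φ(G)
    rw [hG, hG']
    obtain ⟨Q₀, hQ0ne, hQ0c, hmin⟩ := hTne.csInf_mem hTfin
    have hle1 : sInf T' ≤ condSet (expandGens p S) Q₀ :=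
      csInf_le hT'bdd ⟨Q₀, hQ0ne, hQ0c, rfl⟩
    have hq := hq0 Q₀ hQ0ne
    have hq0pos : (0:ℝ) < Q₀.card := by exact_mod_cast hQ0ne.card_pos
    -- Gauss sum
    have hgauss : (∑ k ∈ Finset.Icc 1 t, (k : ℝ)) = t * (t + 1) / 2 := by
      have h1 : ∑ k ∈ Finset.Icc 1 t, k = ∑ k ∈ Finset.range (t + 1), k := by
        rw [Finset.range_eq_Ico, Finset.sum_eq_sum_Ico_succ_bot (Nat.succ_pos t),
          Nat.succ_eq_add_one, Finset.Ico_add_one_right_eq_Icc]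
        simp
      have hnat : (∑ k ∈ Finset.Icc 1 t, k) * 2 = t * (t + 1) := by
        rw [h1, Finset.sum_range_id_mul_two (t + 1), Nat.add_sub_cancel, mul_comm]
      have hR : ((∑ k ∈ Finset.Icc 1 t, k : ℕ) : ℝ) * 2 = (t : ℝ) * ((t : ℝ) + 1) := by
        exact_mod_cast congrArg (Nat.cast : ℕ → ℝ) hnat
      push_cast at hR ⊢
      linarith
    -- cut bound
    have hcutb : (cutEdges (expandGens p S) Q₀ : ℝ)
        ≤ (t * (t + 1) / 2) * (cutEdges S Q₀ : ℝ) := by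
      have h1 : (cutEdges (expandGens p S) Q₀ : ℝ)
          ≤ ∑ k ∈ Finset.Icc 1 t, (k : ℝ) * (cutEdges S Q₀ : ℝ) := by
        rw [cutEdges_expand, ← htdef]
        push_cast
        apply Finset.sum_le_sum
        intro k _
        exact_mod_cast cutEdges_nsmul_le k S Q₀
      rw [← Finset.sum_mul, hgauss] at h1
      exact h1
    have hkey : condSet (expandGens p S) Q₀ ≤ ((p : ℝ) + 1) / 4 * condSet S Q₀ := by
      rw [condSet, condSet, card_expandGens, ← htdef]
      have hpc : (p : ℝ) = 2 * (c : ℝ) + 1 := by exact_mod_cast hc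
      have htc : (t : ℝ) = (c : ℝ) := by exact_mod_cast ht
      rw [div_le_iff₀ (by push_cast; exact mul_pos (mul_pos htRpos hSpos) hq0pos)]
      have hrhs : ((p : ℝ) + 1) / 4 * ((cutEdges S Q₀ : ℝ) /
          ((Multiset.card S : ℝ) * Q₀.card)) * ((t * Multiset.card S : ℕ) * (Q₀.card : ℝ))
          = (t * (t + 1) / 2) * (cutEdges S Q₀ : ℝ) := by
        push_cast
        rw [htc, hpc]
        field_simp
        ring
      rw [hrhs]
      exact hcutb
    calc sInf T' ≤ condSet (expandGens p S) Q₀ := hle1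
      _ ≤ ((p : ℝ) + 1) / 4 * condSet S Q₀ := hkey
      _ = ((p : ℝ) + 1) / 4 * sInf T := by rw [← hmin]
end
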